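/- arXiv:2303.00147 — 6 statements merged into one kernel-verified Lean document; each statement's English description precedes it below -/
import Mathlib

section
/- The number of binary sequences of length n containing exactly ℓ ones (with 2 ≤ ℓ ≤ n) that avoid the consecutive pattern 0,1,0 is at least the binomial coefficient C(n − ⌈ℓ/2⌉, ⌊ℓ/2⌋). -/
namespace Stmt1

/-- rank of `a` in `S`: number of elements of `S` below `a`. -/
def rk (S : Finset ℕ) (a : ℕ) : ℕ := (S.filter (· < a)).card

/-- start position of the block of `a`. -/
def pos (S : Finset ℕ) (a : ℕ) : ℕ := a + rk S a

/-- the binary sequence (as `ℕ → Bool`) attached to `S`; `o` says whether the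
top block has an extra one. -/
def t (o : Bool) (S : Finset ℕ) (q : ℕ) : Bool :=
  decide (∃ a ∈ S, q = pos S a ∨ q = pos S a + 1 ∨
    (o = true ∧ S.max = (a : ℕ) ∧ q = pos S a + 2))

lemma t_iff (o : Bool) (S : Finset ℕ) (q : ℕ) :
    t o S q = true ↔ ∃ a ∈ S, q = pos S a ∨ q = pos S a + 1 ∨
      (o = true ∧ S.max = (a : ℕ) ∧ q = pos S a + 2) := by
  simp [t]

lemma rk_mono (S : Finset ℕ) {a b : ℕ} (hab : a ≤ b) : rk S a ≤ rk S b := by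
  apply Finset.card_le_card
  intro x hx
  simp only [Finset.mem_filter] at *
  exact ⟨hx.1, lt_of_lt_of_le hx.2 hab⟩

lemma rk_lt (S : Finset ℕ) {a b : ℕ} (ha : a ∈ S) (hab : a < b) :
    rk S a < rk S b := by
  apply Finset.card_lt_card
  constructor
  · intro x hx
    simp only [Finset.mem_filter] at *
    exact ⟨hx.1, lt_trans hx.2 hab⟩
  · intro h
    have := h (by simp only [Finset.mem_filter]; exact ⟨ha, hab⟩)
    simp only [Finset.mem_filter] at this
    omega

lemma rk_lt_card (S : Finset ℕ) {a : ℕ} (ha : a ∈ S) : rk S a < S.card := by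
  apply Finset.card_lt_card
  constructor
  · exact Finset.filter_subset _ _
  · intro h
    have := h ha
    simp only [Finset.mem_filter] at this
    omega

lemma pos_mono (S : Finset ℕ) {a b : ℕ} (hab : a ≤ b) : pos S a ≤ pos S b := by
  have := rk_mono S hab
  unfold pos; omega

lemma pos_add_two_le (S : Finset ℕ) {a b : ℕ} (ha : a ∈ S) (hab : a < b) :
    pos S a + 2 ≤ pos S b := by
  have := rk_lt S ha hab
  unfold pos; omega

lemma pos_inj (S : Finset ℕ) {a b : ℕ} (ha : a ∈ S) (hb : b ∈ S)
    (h : pos S a = pos S b) : a = b := by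
  rcases lt_trichotomy a b with h' | h' | h'
  · have := pos_add_two_le S ha h'; omega
  · exact h'
  · have := pos_add_two_le S hb h'; omega

/-- true positions below the start of block `a` are exactly the blocks of
elements smaller than `a`. -/
lemma filter_range_pos (o : Bool) (S : Finset ℕ) {a : ℕ} (ha : a ∈ S) :
    (Finset.range (pos S a)).filter (fun q => t o S q = true)
      = (S.filter (· < a)).biUnion (fun b => {pos S b, pos S b + 1}) := by
  ext q
  simp only [Finset.mem_filter, Finset.mem_range, Finset.mem_biUnion,
    Finset.mem_insert, Finset.mem_singleton, t_iff]
  constructor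
  · rintro ⟨hq, b, hb, hcase⟩
    have hba : b < a := by
      by_contra hcon
      push_neg at hcon
      have := pos_mono S hcon
      rcases hcase with h | h | ⟨_, hmax, h⟩
      · omega
      · omega
      · -- b is the max, so a ≤ b hence pos a ≤ pos b
        have hle : a ≤ b := by
          have := Finset.le_max ha
          rw [hmax] at this
          exact WithBot.coe_le_coe.1 this
        have := pos_mono S hle
        omega
    refine ⟨b, by simp [Finset.mem_filter, hb, hba], ?_⟩
    have h2 := pos_add_two_le S hb hba
    rcases hcase with h | h | ⟨_, hmax, h⟩
    · left; exact h
    · right; exact h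
    · -- b = max but b < a ≤ max : contradiction
      have hle : a ≤ b := by
        have := Finset.le_max ha
        rw [hmax] at this
        exact WithBot.coe_le_coe.1 this
      omega
  · rintro ⟨b, hb, hcase⟩
    have hba : b < a := hb.2
    have h2 := pos_add_two_le S hb.1 hba
    exact ⟨by omega, b, hb.1, by omega⟩

lemma pairs_disjoint (S : Finset ℕ) {b c : ℕ} (hb : b ∈ S) (hc : c ∈ S)
    (hbc : b ≠ c) :
    Disjoint ({pos S b, pos S b + 1} : Finset ℕ) {pos S c, pos S c + 1} := by
  rcases lt_or_gt_of_ne hbc with h | h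
  · have := pos_add_two_le S hb h
    simp only [Finset.disjoint_insert_left, Finset.disjoint_singleton_left,
      Finset.mem_insert, Finset.mem_singleton]
    omega
  · have := pos_add_two_le S hc h
    simp only [Finset.disjoint_insert_left, Finset.disjoint_singleton_left,
      Finset.mem_insert, Finset.mem_singleton]
    omega

lemma cnt_pos (o : Bool) (S : Finset ℕ) {a : ℕ} (ha : a ∈ S) :
    ((Finset.range (pos S a)).filter (fun q => t o S q = true)).card
      = 2 * rk S a := by
  rw [filter_range_pos o S ha]
  rw [Finset.card_biUnion]
  · rw [Finset.sum_congr rfl (fun b _ => by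
      rw [Finset.card_insert_of_notMem (by simp), Finset.card_singleton])]
    simp [rk, Finset.sum_const, mul_comm]
  · intro b hb c hc hbc
    simp only [Finset.coe_filter, Finset.mem_coe, Finset.mem_filter, Set.mem_setOf_eq] at hb hc
    exact pairs_disjoint S hb.1 hc.1 hbc

lemma cnt_pos_succ (o : Bool) (S : Finset ℕ) {a : ℕ} (ha : a ∈ S) :
    ((Finset.range (pos S a + 1)).filter (fun q => t o S q = true)).card
      = 2 * rk S a + 1 := by
  have : Finset.range (pos S a + 1) = insert (pos S a) (Finset.range (pos S a)) := by
    rw [Finset.range_add_one]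
  rw [this, Finset.filter_insert]
  have hta : t o S (pos S a) = true := by
    rw [t_iff]; exact ⟨a, ha, Or.inl rfl⟩
  rw [if_pos hta, Finset.card_insert_of_notMem (by simp), cnt_pos o S ha]

/-- characterization of block starts, purely in terms of `t`. -/
lemma start_char (o : Bool) (S : Finset ℕ) (p : ℕ) :
    (t o S p = true ∧ t o S (p + 1) = true ∧
     ((Finset.range p).filter (fun q => t o S q = true)).card % 2 = 0)
    ↔ ∃ a ∈ S, p = pos S a := by
  constructor
  · rintro ⟨hp, hp1, hpar⟩
    rw [t_iff] at hp
    obtain ⟨a, ha, hcase⟩ := hp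
    rcases hcase with h | h | ⟨ho, hmax, h⟩
    · exact ⟨a, ha, h⟩
    · exfalso
      rw [h] at hpar
      rw [cnt_pos_succ o S ha] at hpar
      omega
    · exfalso
      -- p = pos a + 2 with a the max; then t (p+1) must be false
      rw [t_iff] at hp1
      obtain ⟨b, hb, hcase'⟩ := hp1
      have hba : b ≤ a := by
        have := Finset.le_max hb
        rw [hmax] at this
        exact WithBot.coe_le_coe.1 this
      have hpb : pos S b ≤ pos S a := pos_mono S hba
      rcases hcase' with h' | h' | ⟨_, hmax', h'⟩
      · omega
      · omega
      · have : b = a := by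
          have := hmax.symm.trans hmax'
          exact (WithBot.coe_inj.1 this).symm
        omega
  · rintro ⟨a, ha, rfl⟩
    refine ⟨?_, ?_, ?_⟩
    · rw [t_iff]; exact ⟨a, ha, Or.inl rfl⟩
    · rw [t_iff]; exact ⟨a, ha, Or.inr (Or.inl rfl)⟩
    · rw [cnt_pos o S ha]; omega

lemma subset_of_t_eq (o : Bool) {S T : Finset ℕ}
    (h : ∀ q, t o S q = t o T q) : S ⊆ T := by
  intro a ha
  have h1 : ∃ b ∈ T, pos S a = pos T b := by
    rw [← start_char o T (pos S a)]
    have h2 := (start_char o S (pos S a)).2 ⟨a, ha, rfl⟩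
    refine ⟨?_, ?_, ?_⟩
    · rw [← h]; exact h2.1
    · rw [← h]; exact h2.2.1
    · rw [show (Finset.range (pos S a)).filter (fun q => t o T q = true)
          = (Finset.range (pos S a)).filter (fun q => t o S q = true) from
          Finset.filter_congr (fun q _ => by rw [h])]
      exact h2.2.2
  obtain ⟨b, hb, hpb⟩ := h1
  have hc : 2 * rk S a = 2 * rk T b := by
    rw [← cnt_pos o S ha, ← cnt_pos o T hb, hpb]
    congr 1
    exact Finset.filter_congr (fun q _ => by rw [h])
  have : a = b := by unfold pos at hpb; omega
  rwa [this]

lemma t_eq_of_eq (o : Bool) {S T : Finset ℕ}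
    (h : ∀ q, t o S q = t o T q) : S = T :=
  Finset.Subset.antisymm (subset_of_t_eq o h)
    (subset_of_t_eq o (fun q => (h q).symm))

/-- upper bound on true positions. -/
lemma t_bound (o : Bool) {S : Finset ℕ} {m q : ℕ} (hSm : S ⊆ Finset.range m)
    (hq : t o S q = true) : q < m + S.card + (if o then 1 else 0) := by
  rw [t_iff] at hq
  obtain ⟨a, ha, hcase⟩ := hq
  have ham : a < m := Finset.mem_range.1 (hSm ha)
  have hrk : rk S a < S.card := rk_lt_card S ha
  have hpos : pos S a + 1 < m + S.card := by unfold pos; omega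
  rcases hcase with h | h | ⟨ho, _, h⟩
  · omega
  · omega
  · rw [ho]; simp; omega

/-- total number of true positions. -/
lemma card_trues (o : Bool) (S : Finset ℕ) (hne : S.Nonempty) {N : ℕ}
    (hN : ∀ q, t o S q = true → q < N) :
    ((Finset.range N).filter (fun q => t o S q = true)).card
      = 2 * S.card + (if o then 1 else 0) := by
  classical
  set M := S.max' hne with hM
  have hMmem : M ∈ S := S.max'_mem hne
  have hMmax : S.max = (M : ℕ) := (S.coe_max' hne).symm
  have key : (Finset.range N).filter (fun q => t o S q = true)
      = (S.biUnion (fun b => {pos S b, pos S b + 1}))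
        ∪ (if o then {pos S M + 2} else ∅) := by
    ext q
    simp only [Finset.mem_filter, Finset.mem_range, Finset.mem_union,
      Finset.mem_biUnion, Finset.mem_insert, Finset.mem_singleton]
    constructor
    · rintro ⟨hq, ht⟩
      rw [t_iff] at ht
      obtain ⟨a, ha, hcase⟩ := ht
      rcases hcase with h | h | ⟨ho, hmax, h⟩
      · exact Or.inl ⟨a, ha, Or.inl h⟩
      · exact Or.inl ⟨a, ha, Or.inr h⟩
      · right
        have : a = M := by
          have := hmax.symm.trans hMmax
          exact WithBot.coe_inj.1 this
        rw [ho, if_pos rfl, Finset.mem_singleton]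
        rw [h, this]
    · intro hcase
      have hqt : t o S q = true := by
        rw [t_iff]
        rcases hcase with ⟨a, ha, h | h⟩ | h
        · exact ⟨a, ha, Or.inl h⟩
        · exact ⟨a, ha, Or.inr (Or.inl h)⟩
        · by_cases ho : o = true
          · rw [if_pos ho, Finset.mem_singleton] at h
            exact ⟨M, hMmem, Or.inr (Or.inr ⟨ho, hMmax, h⟩)⟩
          · simp [ho] at h
      exact ⟨hN q hqt, hqt⟩
  rw [key]
  have hdisj : Disjoint (S.biUnion (fun b => {pos S b, pos S b + 1}))
      (if o then ({pos S M + 2} : Finset ℕ) else ∅) := by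
    by_cases ho : o = true
    · rw [if_pos ho, Finset.disjoint_right]
      intro x hx
      rw [Finset.mem_singleton] at hx
      simp only [Finset.mem_biUnion, Finset.mem_insert, Finset.mem_singleton]
      rintro ⟨b, hb, hcase⟩
      have : b ≤ M := S.le_max' b hb
      have := pos_mono S this
      omega
    · simp [ho]
  rw [Finset.card_union_of_disjoint hdisj, Finset.card_biUnion
    (fun b hb c hc hbc => pairs_disjoint S hb hc hbc)]
  rw [Finset.sum_congr rfl (fun b _ => by
    rw [Finset.card_insert_of_notMem (by simp), Finset.card_singleton])]
  simp only [Finset.sum_const, smul_eq_mul]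
  by_cases ho : o = true <;> simp [ho, mul_comm]

/-- no 010 pattern. -/
lemma no010 (o : Bool) (S : Finset ℕ) (i : ℕ) (h1 : t o S (i + 1) = true) :
    t o S i = true ∨ t o S (i + 2) = true := by
  rw [t_iff] at h1
  obtain ⟨a, ha, hcase⟩ := h1
  rcases hcase with h | h | ⟨ho, hmax, h⟩
  · right; rw [t_iff]; exact ⟨a, ha, Or.inr (Or.inl (by omega))⟩
  · left; rw [t_iff]; exact ⟨a, ha, Or.inl (by omega)⟩
  · left; rw [t_iff]; exact ⟨a, ha, Or.inr (Or.inl (by omega))⟩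

end Stmt1


open Stmt1 in
/-- The number of binary sequences of length `n` with exactly `ℓ` ones
(`2 ≤ ℓ ≤ n`) avoiding the consecutive pattern `0,1,0` is at least
`C(n - ⌈ℓ/2⌉, ⌊ℓ/2⌋)`. -/
theorem stmt1 (n ℓ : ℕ) (h2 : 2 ≤ ℓ) (hn : ℓ ≤ n) :
    Nat.choose (n - (ℓ + 1) / 2) (ℓ / 2) ≤
      {s : Fin n → Bool |
        (Finset.univ.filter (fun i => s i = true)).card = ℓ ∧
        ¬ ∃ i : ℕ, ∃ h : i + 2 < n,
            s ⟨i, by omega⟩ = false ∧ s ⟨i + 1, by omega⟩ = true ∧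
            s ⟨i + 2, h⟩ = false}.ncard := by
  classical
  set k := ℓ / 2 with hk
  set m := n - (ℓ + 1) / 2 with hm
  set o : Bool := decide (ℓ % 2 = 1) with ho
  have hob : (if o then 1 else 0) = ℓ % 2 := by
    by_cases h : ℓ % 2 = 1
    · simp [ho, h]
    · have h0 : ℓ % 2 = 0 := by omega
      simp [ho, h, h0]
  have hn' : n = m + k + (ℓ % 2) := by omega
  have hk1 : 1 ≤ k := by omega
  set F : Finset ℕ → (Fin n → Bool) := fun S i => t o S i.val with hF
  set T : Finset (Fin n → Bool) := ((Finset.range m).powersetCard k).image F with hT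
  have hbound : ∀ S ∈ (Finset.range m).powersetCard k, ∀ q, t o S q = true → q < n := by
    intro S hS q hq
    rw [Finset.mem_powersetCard] at hS
    have hb := t_bound o hS.1 hq
    rw [hS.2] at hb
    omega
  have hTcard : T.card = Nat.choose m k := by
    rw [hT, Finset.card_image_of_injOn, Finset.card_powersetCard, Finset.card_range]
    intro S hS T' hT' hFeq
    have hS' := Finset.mem_coe.1 hS
    have hT'' := Finset.mem_coe.1 hT'
    apply t_eq_of_eq o
    intro q
    by_cases hq : q < n
    · exact congrFun hFeq ⟨q, hq⟩
    · have h1 : t o S q = false := by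
        by_contra hc
        exact hq (hbound S hS' q (by simpa using hc))
      have h2 : t o T' q = false := by
        by_contra hc
        exact hq (hbound T' hT'' q (by simpa using hc))
      rw [h1, h2]
  have hsub : (↑T : Set (Fin n → Bool)) ⊆
      {s : Fin n → Bool |
        (Finset.univ.filter (fun i => s i = true)).card = ℓ ∧
        ¬ ∃ i : ℕ, ∃ h : i + 2 < n,
            s ⟨i, by omega⟩ = false ∧ s ⟨i + 1, by omega⟩ = true ∧
            s ⟨i + 2, h⟩ = false} := by
    intro s hs
    rw [Finset.mem_coe, hT, Finset.mem_image] at hs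
    obtain ⟨S, hS, rfl⟩ := hs
    have hSm := (Finset.mem_powersetCard.1 hS).1
    have hSc := (Finset.mem_powersetCard.1 hS).2
    have hne : S.Nonempty := Finset.card_pos.1 (by omega)
    constructor
    · -- exactly ℓ ones
      have himg : Finset.image (fun i : Fin n => (i : ℕ))
          (Finset.univ.filter fun i => F S i = true)
          = (Finset.range n).filter (fun q => t o S q = true) := by
        ext q
        simp only [Finset.mem_image, Finset.mem_filter, Finset.mem_univ,
          Finset.mem_range, true_and]
        constructor
        · rintro ⟨i, hi, rfl⟩
          exact ⟨i.isLt, hi⟩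
        · rintro ⟨hq, ht⟩
          exact ⟨⟨q, hq⟩, ht, rfl⟩
      have hcard := Finset.card_image_of_injective
        (Finset.univ.filter fun i => F S i = true) Fin.val_injective
      rw [himg] at hcard
      have := card_trues o S hne (hbound S hS)
      rw [this] at hcard
      rw [← hcard]
      omega
    · rintro ⟨i, h, hi0, hi1, hi2⟩
      have h1 : t o S (i + 1) = true := hi1
      have h0 : t o S i = false := hi0
      have h2 : t o S (i + 2) = false := hi2
      rcases no010 o S i h1 with hc | hc
      · rw [h0] at hc; exact Bool.false_ne_true hc
      · rw [h2] at hc; exact Bool.false_ne_true hc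
  calc Nat.choose m k = T.card := hTcard.symm
    _ = (↑T : Set (Fin n → Bool)).ncard := (Set.ncard_coe_finset T).symm
    _ ≤ _ := Set.ncard_le_ncard hsub (Set.toFinite _)
end

section
/- Let S be a finite nonempty set of points in the plane and let p be a point not contained in the convex hull of S. Then there exists a vertex q of the convex hull of S (an extreme point of S) such that the open line segment from p to q is disjoint from the convex hull of S. Moreover, if S ∪ {p} is not contained in a single line, there are at least two such vertices q. -/
abbrev Pt : Type := EuclideanSpace ℝ (Fin 2)

namespace Stmt3Aux

/-- An explicit linear functional on the plane. -/
def lf (A B : ℝ) : Pt →ₗ[ℝ] ℝ where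
  toFun x := A * x 0 + B * x 1
  map_add' x y := by simp [PiLp.add_apply]; ring
  map_smul' c x := by simp [PiLp.smul_apply, smul_eq_mul]; ring

@[simp] lemma lf_apply (A B : ℝ) (x : Pt) : lf A B x = A * x 0 + B * x 1 := rfl

lemma lf_inj {a b c d : ℝ} (hdet : a * d - b * c ≠ 0) {x y : Pt}
    (h1 : lf a b x = lf a b y) (h2 : lf c d x = lf c d y) : x = y := by
  simp only [lf_apply] at h1 h2
  have h0 : x 0 = y 0 := by
    have : (a * d - b * c) * (x 0) = (a * d - b * c) * (y 0) := by linear_combination d * h1 - b * h2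
    exact mul_left_cancel₀ hdet this
  have h1' : x 1 = y 1 := by
    have : (a * d - b * c) * (x 1) = (a * d - b * c) * (y 1) := by linear_combination a * h2 - c * h1
    exact mul_left_cancel₀ hdet this
  ext i
  fin_cases i
  · exact h0
  · exact h1'

lemma face_lemma (h : Pt →ₗ[ℝ] ℝ) (c : ℝ) (S : Set Pt)
    (hS : ∀ s ∈ S, h s ≤ c) {x : Pt} (hx : x ∈ convexHull ℝ S) (hxc : h x = c) :
    x ∈ convexHull ℝ {s | s ∈ S ∧ h s = c} := by
  classical
  rw [convexHull_eq] at hx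
  obtain ⟨ι, t, w, z, hw0, hw1, hzS, hcm⟩ := hx
  have hsum : x = ∑ i ∈ t, w i • z i := by
    rw [← hcm, Finset.centerMass_eq_of_sum_1 _ _ hw1]
  have hface : ∀ i ∈ t, w i ≠ 0 → h (z i) = c := by
    intro j hj hwj
    by_contra hne
    have hjlt : h (z j) < c := lt_of_le_of_ne (hS _ (hzS _ hj)) hne
    have hwjpos : 0 < w j := lt_of_le_of_ne (hw0 _ hj) (Ne.symm hwj)
    have hlt : ∑ i ∈ t, w i * h (z i) < ∑ i ∈ t, w i * c := by
      apply Finset.sum_lt_sum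
      · intro i hi; exact mul_le_mul_of_nonneg_left (hS _ (hzS _ hi)) (hw0 _ hi)
      · exact ⟨j, hj, by nlinarith⟩
    have hx' : h x = ∑ i ∈ t, w i * h (z i) := by
      rw [hsum, map_sum]
      simp [smul_eq_mul]
    have : c < c := by
      calc c = h x := hxc.symm
        _ = ∑ i ∈ t, w i * h (z i) := hx'
        _ < ∑ i ∈ t, w i * c := hlt
        _ = c := by rw [← Finset.sum_mul, hw1, one_mul]
    exact lt_irrefl _ this
  rw [← hcm, ← Finset.centerMass_filter_ne_zero]
  apply Finset.centerMass_mem_convexHull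
  · intro i hi; exact hw0 _ (Finset.mem_filter.1 hi).1
  · rw [Finset.sum_filter_ne_zero, hw1]; exact one_pos
  · intro i hi
    obtain ⟨hit, hwi⟩ := Finset.mem_filter.1 hi
    exact ⟨hzS _ hit, hface _ hit hwi⟩


lemma main_aux (S : Set Pt) (hfin : S.Finite) (hne : S.Nonempty) (p : Pt)
    (f g : Pt →ₗ[ℝ] ℝ)
    (hsep : ∀ s ∈ S, f p < f s)
    (hinj : ∀ x y : Pt, f x = f y → g x = g y → x = y) :
    ∃ q ∈ S, (q ∉ convexHull ℝ (S \ {q}) ∧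
      openSegment ℝ p q ∩ convexHull ℝ S = ∅) ∧
      ∀ s ∈ S, g s - g p ≤ (g q - g p) / (f q - f p) * (f s - f p) := by
  classical
  set T := hfin.toFinset with hT
  have hTne : T.Nonempty := by rwa [hT, Set.Finite.toFinset_nonempty]
  set θ : Pt → ℝ := fun s => (g s - g p) / (f s - f p) with hθ
  obtain ⟨qm, hqmT, hqmax⟩ := T.exists_max_image θ hTne
  set M := θ qm with hM
  set L := T.filter (fun s => θ s = M) with hL
  have hLne : L.Nonempty := ⟨qm, Finset.mem_filter.2 ⟨hqmT, rfl⟩⟩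
  obtain ⟨q, hqL, hqmin⟩ := L.exists_min_image f hLne
  obtain ⟨hqT, hqM⟩ := Finset.mem_filter.1 hqL
  have hqS : q ∈ S := hfin.mem_toFinset.1 hqT
  have hpos : ∀ s ∈ S, 0 < f s - f p := fun s hs => sub_pos.2 (hsep s hs)
  set h : Pt →ₗ[ℝ] ℝ := g - M • f with hh
  have happ : ∀ x, h x = g x - M * f x := fun x => rfl
  set c : ℝ := g p - M * f p with hc
  have hθle : ∀ s ∈ S, θ s ≤ M := fun s hs => hqmax s (hfin.mem_toFinset.2 hs)
  have hineq : ∀ s ∈ S, h s ≤ c := by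
    intro s hs
    have h2 : g s - g p ≤ M * (f s - f p) := (div_le_iff₀ (hpos s hs)).1 (hθle s hs)
    rw [happ, hc]; linarith
  have hq_eq : h q = c := by
    have h2 : g q - g p = M * (f q - f p) := (div_eq_iff (hpos q hqS).ne').1 hqM
    rw [happ, hc]; linarith
  have hp_eq : h p = c := by rw [happ, hc]
  have hbd : ∀ s ∈ S, h s = c → s ∈ L := by
    intro s hs hsc
    refine Finset.mem_filter.2 ⟨hfin.mem_toFinset.2 hs, ?_⟩
    rw [happ, hc] at hsc
    have h2 : g s - g p = M * (f s - f p) := by linarith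
    rw [hθ]
    rw [div_eq_iff (hpos s hs).ne']
    exact h2
  have hfmin : ∀ s ∈ S, h s = c → f q ≤ f s := fun s hs hsc => hqmin s (hbd s hs hsc)
  refine ⟨q, hqS, ⟨⟨?_, ?_⟩, ?_⟩⟩
  · -- extreme point
    intro hcon
    have h2 := face_lemma h c (S \ {q}) (fun s hs => hineq s hs.1) hcon hq_eq
    have h3 : {s | s ∈ S \ {q} ∧ h s = c} ⊆ {x | f q < f x} := by
      rintro s ⟨⟨hsS, hsq⟩, hsc⟩
      rcases lt_or_eq_of_le (hfmin s hsS hsc) with hlt | heq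
      · exact hlt
      · exfalso
        apply hsq
        have hgs : g s = g q := by
          have e1 : h s = h q := by rw [hsc, hq_eq]
          rw [happ, happ] at e1
          have e2 : f s = f q := heq.symm
          have e3 : M * f s = M * f q := by rw [e2]
          linarith
        exact Set.mem_singleton_iff.2 (hinj s q heq.symm hgs)
    have h4 := convexHull_min h3 (convex_halfSpace_gt f.isLinear (f q)) h2
    exact lt_irrefl (f q) h4
  · -- visibility
    rw [Set.eq_empty_iff_forall_notMem]
    rintro x ⟨hxseg, hxconv⟩
    obtain ⟨a, b, ha, hb, hab, hxe⟩ := hxseg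
    have hx_eq : h x = c := by
      rw [← hxe, map_add, map_smul, map_smul, smul_eq_mul, smul_eq_mul, hp_eq, hq_eq]
      rw [← add_mul, hab, one_mul]
    have h2 := face_lemma h c S hineq hxconv hx_eq
    have h3 : {s | s ∈ S ∧ h s = c} ⊆ {x | f q ≤ f x} := fun s hs => hfmin s hs.1 hs.2
    have h4 := convexHull_min h3 (convex_halfSpace_ge f.isLinear (f q)) h2
    have h5 : f x = a * f p + b * f q := by
      rw [← hxe, map_add, map_smul, map_smul, smul_eq_mul, smul_eq_mul]
    have h6 : f p < f q := hsep q hqS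
    have h7 : f q ≤ f x := h4
    have hb' : b = 1 - a := by linarith
    rw [hb'] at h5
    nlinarith [mul_pos ha (sub_pos.2 h6)]
  · -- maximality
    intro s hs
    have h2 : g s - g p ≤ M * (f s - f p) := (div_le_iff₀ (hpos s hs)).1 (hθle s hs)
    have h3 : (g q - g p) / (f q - f p) = M := hqM
    rw [h3]
    exact h2


end Stmt3Aux

open Stmt3Aux in
set_option maxHeartbeats 1000000 in
/-- Every nonempty finite point set `S` and point `p` outside its convex hull
has a visible vertex: an extreme point `q` of `S` such that the open segment
`pq` misses the convex hull of `S`. Moreover, if `S ∪ {p}` is not collinear,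
there are at least two such visible vertices. -/
theorem stmt3 (S : Set Pt) (hfin : S.Finite) (hne : S.Nonempty) (p : Pt)
    (hp : p ∉ convexHull ℝ S) :
    (∃ q ∈ S, q ∉ convexHull ℝ (S \ {q}) ∧
        openSegment ℝ p q ∩ convexHull ℝ S = ∅) ∧
    (¬ Collinear ℝ (S ∪ {p}) →
      ∃ q₁ q₂ : Pt, q₁ ≠ q₂ ∧
        (q₁ ∈ S ∧ q₁ ∉ convexHull ℝ (S \ {q₁}) ∧
          openSegment ℝ p q₁ ∩ convexHull ℝ S = ∅) ∧
        (q₂ ∈ S ∧ q₂ ∉ convexHull ℝ (S \ {q₂}) ∧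
          openSegment ℝ p q₂ ∩ convexHull ℝ S = ∅)) := by
  classical
  have hcl : IsClosed (convexHull ℝ S) := (hfin.isCompact_convexHull ℝ).isClosed
  obtain ⟨f₀, u, hpu, hub⟩ := geometric_hahn_banach_point_closed (convex_convexHull ℝ S) hcl hp
  set a := f₀ (EuclideanSpace.single 0 1) with ha
  set b := f₀ (EuclideanSpace.single 1 1) with hb
  have hrep : ∀ x : Pt, f₀ x = a * x 0 + b * x 1 := by
    intro x
    have hx : x = x 0 • (EuclideanSpace.single 0 1 : Pt)
        + x 1 • (EuclideanSpace.single 1 1 : Pt) := by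
      ext i
      fin_cases i <;> simp [EuclideanSpace.single_apply]
    calc f₀ x = f₀ (x 0 • (EuclideanSpace.single 0 1 : Pt)
        + x 1 • (EuclideanSpace.single 1 1 : Pt)) := by rw [← hx]
      _ = a * x 0 + b * x 1 := by
          rw [map_add, map_smul, map_smul, smul_eq_mul, smul_eq_mul, ← ha, ← hb]; ring
  set f := lf a b with hf
  have hfeq : ∀ x : Pt, f x = f₀ x := by intro x; rw [hf, lf_apply, hrep]
  have hsep : ∀ s ∈ S, f p < f s := by
    intro s hs
    rw [hfeq, hfeq]
    exact lt_trans hpu (hub s (subset_convexHull ℝ S hs))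
  have hsq : 0 < a ^ 2 + b ^ 2 := by
    rcases eq_or_ne a 0 with ha0 | ha0
    · rcases eq_or_ne b 0 with hb0 | hb0
      · exfalso
        obtain ⟨s, hs⟩ := hne
        have := hsep s hs
        rw [hf] at this
        simp [lf_apply, ha0, hb0] at this
      · positivity
    · positivity
  set g := lf (-b) a with hg
  set g₂ := lf b (-a) with hg₂def
  have hinj : ∀ x y : Pt, f x = f y → g x = g y → x = y := by
    intro x y h1 h2
    exact lf_inj (a := a) (b := b) (c := -b) (d := a) (by nlinarith) h1 h2
  have hinj₂ : ∀ x y : Pt, f x = f y → g₂ x = g₂ y → x = y := by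
    intro x y h1 h2
    exact lf_inj (a := a) (b := b) (c := b) (d := -a) (by nlinarith) h1 h2
  obtain ⟨q₁, hq₁S, ⟨hq₁ext, hq₁vis⟩, hq₁max⟩ := main_aux S hfin hne p f g hsep hinj
  obtain ⟨q₂, hq₂S, ⟨hq₂ext, hq₂vis⟩, hq₂max⟩ := main_aux S hfin hne p f g₂ hsep hinj₂
  refine ⟨⟨q₁, hq₁S, hq₁ext, hq₁vis⟩, ?_⟩
  intro hncol
  refine ⟨q₁, q₂, ?_, ⟨hq₁S, hq₁ext, hq₁vis⟩, ⟨hq₂S, hq₂ext, hq₂vis⟩⟩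
  intro heq
  apply hncol
  rw [← heq] at hq₂max
  set M := (g q₁ - g p) / (f q₁ - f p) with hM
  have hgg₂ : ∀ x : Pt, g₂ x = - g x := by
    intro x; rw [hg, hg₂def, lf_apply, lf_apply]; ring
  have hEq : ∀ s ∈ S, g s - g p = M * (f s - f p) := by
    intro s hs
    have h1 := hq₁max s hs
    have h2 := hq₂max s hs
    rw [hgg₂ s, hgg₂ p, hgg₂ q₁] at h2
    have h3 : (-g q₁ - -g p) / (f q₁ - f p) = -M := by rw [hM]; ring
    rw [h3] at h2
    linarith
  set h : Pt →ₗ[ℝ] ℝ := g - M • f with hh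
  have happ : ∀ x, h x = g x - M * f x := fun x => rfl
  have hEq' : ∀ s ∈ S ∪ {p}, h s = g p - M * f p := by
    rintro s (hs | hs)
    · rw [happ]
      have := hEq s hs
      linarith
    · rw [Set.mem_singleton_iff.1 hs, happ]
  have hne0 : h ≠ 0 := by
    intro h0
    have e0 : h (EuclideanSpace.single 0 1 : Pt) = 0 := by rw [h0, LinearMap.zero_apply]
    have e1 : h (EuclideanSpace.single 1 1 : Pt) = 0 := by rw [h0, LinearMap.zero_apply]
    rw [happ, hg, hf, lf_apply, lf_apply] at e0 e1
    simp [EuclideanSpace.single_apply] at e0 e1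
    have hz : a ^ 2 + b ^ 2 = 0 := by linear_combination a * e1 - b * e0
    linarith
  have hvs : vectorSpan ℝ (S ∪ {p}) ≤ LinearMap.ker h := by
    rw [vectorSpan_def]
    apply Submodule.span_le.2
    rintro v ⟨x, hx, y, hy, rfl⟩
    have hxv := hEq' x hx
    have hyv := hEq' y hy
    have : h (x -ᵥ y) = 0 := by
      rw [vsub_eq_sub, map_sub, hxv, hyv, sub_self]
    simpa [LinearMap.mem_ker] using this
  have hker : Module.finrank ℝ (LinearMap.ker h) ≤ 1 := by
    have hrn := LinearMap.finrank_range_add_finrank_ker h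
    have hd : Module.finrank ℝ Pt = 2 := finrank_euclideanSpace_fin
    have hr : Module.finrank ℝ (LinearMap.range h) ≠ 0 := by
      intro h0
      rw [Submodule.finrank_eq_zero] at h0
      exact hne0 (LinearMap.range_eq_bot.1 h0)
    omega
  rw [collinear_iff_finrank_le_one]
  exact le_trans (Submodule.finrank_mono hvs) hker
end

section
/- Let S be a finite set of points in the plane, let p be a vertex of the convex hull of S, and let q be another point of S \ {p} that is a vertex of the convex hull of S \ {p} visible from p (the open segment pq is disjoint from the convex hull of S \ {p}). Then the segment pq does not intersect the convex hull of S \ {p, q} except possibly at q's boundary; in particular, the closed segment pq is disjoint from the convex hull of S \ {p, q} minus the point q. -/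
/-- If `p` is an extreme point of a finite set `S`, and `q` is an extreme point
of `S \ {p}` visible from `p` (the open segment `pq` misses the convex hull of
`S \ {p}`), then the closed segment `pq` is disjoint from the convex hull of
`S \ {p, q}` minus the point `q`. -/
theorem stmt4 (S : Set Pt) (hfin : S.Finite) (p q : Pt)
    (hp : p ∈ S) (hq : q ∈ S) (hpq : p ≠ q)
    (hpext : p ∉ convexHull ℝ (S \ {p}))
    (hqext : q ∉ convexHull ℝ ((S \ {p}) \ {q}))
    (hvis : openSegment ℝ p q ∩ convexHull ℝ (S \ {p}) = ∅) :
    segment ℝ p q ∩ (convexHull ℝ (S \ {p, q}) \ {q}) = ∅ := by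
  have hsub : convexHull ℝ (S \ {p, q}) ⊆ convexHull ℝ (S \ {p}) := by
    apply convexHull_mono
    intro x hx
    exact ⟨hx.1, fun h => hx.2 (Or.inl h)⟩
  rw [Set.eq_empty_iff_forall_notMem]
  intro x hx
  have hxseg := hx.1
  have hxhull := hx.2.1
  have hxq : x ≠ q := hx.2.2
  rw [← insert_endpoints_openSegment] at hxseg
  simp only [Set.mem_insert_iff] at hxseg
  rcases hxseg with rfl | rfl | hxo
  · exact hpext (hsub hxhull)
  · exact hxq rfl
  · exact Set.eq_empty_iff_forall_notMem.mp hvis x ⟨hxo, hsub hxhull⟩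
end

section
/- For n ≥ 3, the sum over all triples (a,b,c) of non-negative integers with a+b+c = n−3 of (a+1)·C(a+b, a)·C(b+c, b) equals the coefficient of x^(n−3) in the power series expansion of (1−2x)/(1−3x+x²)². -/
open PowerSeries Finset

namespace Stmt9Aux

noncomputable def V (d : ℕ) : PowerSeries ℚ := (PowerSeries.invOneSubPow ℚ d).val

lemma hV (d : ℕ) : ((1 - X : ℚ⟦X⟧)) ^ d * V d = 1 := by
  have h := (PowerSeries.invOneSubPow ℚ d).inv_val
  rwa [PowerSeries.invOneSubPow_inv_eq_one_sub_pow] at h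

lemma coeffV (b k : ℕ) : coeff (R := ℚ) k (V (b + 1)) = ((b + k).choose b : ℚ) := by
  rw [V, PowerSeries.invOneSubPow_val_succ_eq_mk_add_choose, coeff_mk]

lemma natid (a b : ℕ) :
    (((b + 1 + (a + 1)).choose (b + 1) : ℚ)) + b * ((b + 1 + a).choose (b + 1))
      = ((a + 1 : ℕ) + 1) * (((a + 1) + b).choose (a + 1)) := by
  have pas : (b + 1 + (a + 1)).choose (b + 1)
      = (b + 1 + a).choose b + (b + 1 + a).choose (b + 1) := by
    rw [show b + 1 + (a + 1) = (b + 1 + a) + 1 from by omega]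
    exact Nat.choose_succ_succ _ _
  have h2 : (b + 1 + a).choose (b + 1) * (b + 1) = (b + 1 + a).choose b * (a + 1) := by
    have := Nat.choose_succ_right_eq (b + 1 + a) b
    rwa [show b + 1 + a - b = a + 1 from by omega] at this
  have h3 : ((a + 1) + b).choose (a + 1) = (b + 1 + a).choose b := by
    rw [show (a + 1) + b = b + (a + 1) from by omega, show b + 1 + a = b + (a+1) from by omega,
      Nat.choose_symm_add]
  have h2' : (((b + 1 + a).choose (b + 1) : ℚ)) * (b + 1) = ((b + 1 + a).choose b : ℚ) * (a + 1) := by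
    exact_mod_cast h2
  rw [pas, h3]
  push_cast
  linear_combination h2'

lemma coeffF (b a : ℕ) :
    coeff (R := ℚ) a ((1 + (b : ℚ⟦X⟧) * X) * V (b + 2)) = ((a + 1 : ℕ) : ℚ) * ((a + b).choose a : ℚ) := by
  have hsplit : (1 + (b : ℚ⟦X⟧) * X) * V (b + 2) = V (b + 2) + C (R := ℚ) (b : ℚ) * (X * V (b + 2)) := by
    rw [map_natCast (C (R := ℚ)) b]; ring
  rw [hsplit, map_add, PowerSeries.coeff_C_mul]
  cases a with
  | zero => simp [show b + 2 = (b+1) + 1 from rfl, coeffV]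
  | succ a' =>
    rw [coeff_succ_X_mul, show b + 2 = (b+1) + 1 from rfl, coeffV, coeffV]
    have h := natid a' b
    push_cast at h ⊢
    linear_combination h

lemma key (N : ℕ) :
    ∑ b ∈ range (N + 1),
        (X : ℚ⟦X⟧) ^ b * (1 + (b : ℚ⟦X⟧) * X) * (1 - X) ^ (2 * (N - b)) * (1 - 3 * X + X ^ 2) ^ 2
      = (1 - 2 * X) * (1 - X) ^ (2 * N + 3)
        + X ^ (N + 1) * (-(1 - 3 * X + X ^ 2) - ((N : ℚ⟦X⟧) + 1) * X * (1 - X) ^ 2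
            + (N : ℚ⟦X⟧) * X ^ 2) := by
  induction N with
  | zero => rw [sum_range_one]; push_cast; ring
  | succ N ih =>
    have step : ∀ b ∈ range (N + 1),
        (X : ℚ⟦X⟧) ^ b * (1 + (b : ℚ⟦X⟧) * X) * (1 - X) ^ (2 * (N + 1 - b)) * (1 - 3*X + X^2) ^ 2
          = (1 - X) ^ 2 *
            ((X : ℚ⟦X⟧) ^ b * (1 + (b : ℚ⟦X⟧) * X) * (1 - X) ^ (2 * (N - b)) * (1 - 3*X + X^2) ^ 2) := by
      intro b hb
      rw [mem_range] at hb
      rw [show 2 * (N + 1 - b) = 2 + 2 * (N - b) from by omega, pow_add]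
      ring
    rw [sum_range_succ, Finset.sum_congr rfl step, ← mul_sum, ih, Nat.sub_self]
    push_cast
    ring

lemma inner (b j : ℕ) :
    ∑ p ∈ Finset.HasAntidiagonal.antidiagonal j,
        (((p.1 + 1) * ((p.1 + b).choose p.1) * ((b + p.2).choose b) : ℕ) : ℚ)
      = coeff (R := ℚ) j ((1 + (b : ℚ⟦X⟧) * X) * V (b + 2) * V (b + 1)) := by
  rw [coeff_mul]
  refine Finset.sum_congr rfl fun p hp => ?_
  rw [coeffF, coeffV]
  push_cast
  ring

lemma sumADT (m : ℕ) :
    ∑ t ∈ Finset.Nat.antidiagonalTuple 3 m,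
        (((t 0 + 1) * ((t 0 + t 1).choose (t 0)) * ((t 1 + t 2).choose (t 1)) : ℕ) : ℚ)
      = ∑ b ∈ range (m + 1), ∑ p ∈ Finset.HasAntidiagonal.antidiagonal (m - b),
          (((p.1 + 1) * ((p.1 + b).choose p.1) * ((b + p.2).choose b) : ℕ) : ℚ) := by
  rw [Finset.sum_sigma']
  refine Finset.sum_nbij' (fun t => ⟨t 1, (t 0, t 2)⟩) (fun q => ![q.2.1, q.1, q.2.2])
    ?_ ?_ ?_ ?_ ?_
  · intro t ht
    rw [Finset.Nat.mem_antidiagonalTuple, Fin.sum_univ_three] at ht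
    simp only [Finset.mem_sigma, mem_range, Finset.HasAntidiagonal.mem_antidiagonal]
    omega
  · intro q hq
    simp only [Finset.mem_sigma, mem_range, Finset.HasAntidiagonal.mem_antidiagonal] at hq
    rw [Finset.Nat.mem_antidiagonalTuple, Fin.sum_univ_three]
    simp only [Matrix.cons_val_zero, Matrix.cons_val_one, Matrix.head_cons,
      Matrix.cons_val_two, Matrix.tail_cons]
    omega
  · intro t ht
    funext i
    fin_cases i <;> simp
  · intro q hq
    simp only [Matrix.cons_val_zero, Matrix.cons_val_one, Matrix.head_cons,
      Matrix.cons_val_two, Matrix.tail_cons]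
  · intro t ht
    simp


lemma hE (m : ℕ) :
    (∑ b ∈ range (m + 1), (X : ℚ⟦X⟧) ^ b * ((1 + (b : ℚ⟦X⟧) * X) * V (b + 2) * V (b + 1)))
      = (1 - 2 * X) * ((1 - 3 * X + X ^ 2) ^ 2)⁻¹
        + X ^ (m + 1) * (V (2 * m + 3) * ((1 - 3 * X + X ^ 2) ^ 2)⁻¹ *
            (-(1 - 3 * X + X ^ 2) - ((m : ℚ⟦X⟧) + 1) * X * (1 - X) ^ 2 + (m : ℚ⟦X⟧) * X ^ 2)) := by
  have hPc : constantCoeff (R := ℚ) ((1 - 3 * X + X ^ 2) ^ 2) ≠ 0 := by simp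
  have hP : ((1 - 3 * X + X ^ 2 : ℚ⟦X⟧) ^ 2) * ((1 - 3 * X + X ^ 2) ^ 2)⁻¹ = 1 :=
    PowerSeries.mul_inv_cancel _ hPc
  have hne : ((1 - X : ℚ⟦X⟧) ^ (2 * m + 3) * (1 - 3 * X + X ^ 2) ^ 2) ≠ 0 := by
    intro h
    have h' := congrArg (constantCoeff (R := ℚ)) h
    simp at h'
  apply mul_left_cancel₀ hne
  rw [mul_sum]
  have hterm : ∀ b ∈ range (m + 1),
      (1 - X : ℚ⟦X⟧) ^ (2 * m + 3) * (1 - 3 * X + X ^ 2) ^ 2 *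
          ((X : ℚ⟦X⟧) ^ b * ((1 + (b : ℚ⟦X⟧) * X) * V (b + 2) * V (b + 1)))
        = (X : ℚ⟦X⟧) ^ b * (1 + (b : ℚ⟦X⟧) * X) * (1 - X) ^ (2 * (m - b)) * (1 - 3 * X + X ^ 2) ^ 2 := by
    intro b hb
    rw [mem_range] at hb
    have hVV : (1 - X : ℚ⟦X⟧) ^ (2 * b + 3) * (V (b + 2) * V (b + 1)) = 1 := by
      rw [show 2 * b + 3 = (b + 2) + (b + 1) from by omega, pow_add, mul_mul_mul_comm, hV, hV,
        one_mul]
    have hsplit : (1 - X : ℚ⟦X⟧) ^ (2 * m + 3) = (1 - X) ^ (2 * (m - b)) * (1 - X) ^ (2 * b + 3) := by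
      rw [← pow_add]; congr 1; omega
    rw [hsplit]
    linear_combination ((X : ℚ⟦X⟧) ^ b * (1 + (b : ℚ⟦X⟧) * X) * (1 - X) ^ (2 * (m - b)) *
      (1 - 3 * X + X ^ 2) ^ 2) * hVV
  rw [Finset.sum_congr rfl hterm, key m]
  have hVK : (1 - X : ℚ⟦X⟧) ^ (2 * m + 3) * V (2 * m + 3) = 1 := hV _
  have h3 : (1 - X : ℚ⟦X⟧) ^ (2 * m + 3) * V (2 * m + 3) *
      ((1 - 3 * X + X ^ 2) ^ 2 * ((1 - 3 * X + X ^ 2) ^ 2)⁻¹) = 1 := by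
    rw [hP, mul_one, hVK]
  linear_combination (-((1 - 2 * X) * (1 - X : ℚ⟦X⟧) ^ (2 * m + 3))) * hP +
    (-(X ^ (m + 1) * (-(1 - 3 * X + X ^ 2) - ((m : ℚ⟦X⟧) + 1) * X * (1 - X) ^ 2
      + (m : ℚ⟦X⟧) * X ^ 2))) * h3

end Stmt9Aux

open Stmt9Aux in
/-- For `n ≥ 3`, the sum over all triples `(a,b,c)` of non-negative integers
with `a+b+c = n-3` of `(a+1)·C(a+b,a)·C(b+c,b)` equals the coefficient of
`x^(n-3)` in `(1-2x)/(1-3x+x²)²`. -/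
theorem stmt9 (n : ℕ) (hn : 3 ≤ n) :
    ((∑ t ∈ Finset.Nat.antidiagonalTuple 3 (n - 3),
        (t 0 + 1) * Nat.choose (t 0 + t 1) (t 0) * Nat.choose (t 1 + t 2) (t 1) : ℕ) : ℚ)
      = PowerSeries.coeff (R := ℚ) (n - 3)
          ((1 - 2 * (PowerSeries.X : PowerSeries ℚ)) *
            ((1 - 3 * PowerSeries.X + PowerSeries.X ^ 2) ^ 2)⁻¹) := by
  set m := n - 3 with hm
  rw [Nat.cast_sum, sumADT m]
  have h1 : ∀ b ∈ range (m + 1),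
      (∑ p ∈ Finset.HasAntidiagonal.antidiagonal (m - b),
        (((p.1 + 1) * ((p.1 + b).choose p.1) * ((b + p.2).choose b) : ℕ) : ℚ))
      = coeff (R := ℚ) m ((X : ℚ⟦X⟧) ^ b * ((1 + (b : ℚ⟦X⟧) * X) * V (b + 2) * V (b + 1))) := by
    intro b hb
    rw [mem_range] at hb
    rw [inner b (m - b), PowerSeries.coeff_X_pow_mul', if_pos (by omega)]
  rw [Finset.sum_congr rfl h1, ← map_sum, hE m, map_add]
  have h2 : coeff (R := ℚ) m ((X : ℚ⟦X⟧) ^ (m + 1) * (V (2 * m + 3) * ((1 - 3 * X + X ^ 2) ^ 2)⁻¹ *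
      (-(1 - 3 * X + X ^ 2) - ((m : ℚ⟦X⟧) + 1) * X * (1 - X) ^ 2 + (m : ℚ⟦X⟧) * X ^ 2))) = 0 := by
    rw [PowerSeries.coeff_X_pow_mul', if_neg (by omega)]
  rw [h2, add_zero]
end

section
/- Let S be a finite planar point set with n points, of which ℓ ≥ 2 lie on a line L and the remaining n − ℓ points all lie strictly on one side of L. Then the number of non-crossing Hamiltonian paths of S is at least C(n − ⌈ℓ/2⌉, ⌊ℓ/2⌋). -/
/-- The consecutive segments of the polygonal path through the points of `l`
are pairwise disjoint, except that consecutive segments share exactly their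
common endpoint. -/
def NoncrossingList (l : List Pt) : Prop :=
  (∀ i : ℕ, ∀ h : i + 2 < l.length,
      segment ℝ (l.get ⟨i, by omega⟩) (l.get ⟨i + 1, by omega⟩) ∩
        segment ℝ (l.get ⟨i + 1, by omega⟩) (l.get ⟨i + 2, h⟩) =
      {l.get ⟨i + 1, by omega⟩}) ∧
  (∀ i j : ℕ, ∀ hij : i + 1 < j, ∀ h : j + 1 < l.length,
      segment ℝ (l.get ⟨i, by omega⟩) (l.get ⟨i + 1, by omega⟩) ∩
        segment ℝ (l.get ⟨j, by omega⟩) (l.get ⟨j + 1, h⟩) = ∅)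

/-- `l` is (an orientation of) a non-crossing Hamiltonian path of `S`. -/
def IsNCHamList (S : Finset Pt) (l : List Pt) : Prop :=
  l.Nodup ∧ (∀ x : Pt, x ∈ l ↔ x ∈ S) ∧ NoncrossingList l

/-- The number of non-crossing Hamiltonian paths of `S`: a path is identified
with the (unordered) pair consisting of an ordering of its vertices and its
reversal. -/
noncomputable def hamCount (S : Finset Pt) : ℕ :=
  {P : Set (List Pt) | ∃ l : List Pt, IsNCHamList S l ∧ P = {l, l.reverse}}.ncard

/-- `l` is (an orientation of) a non-crossing path with vertices in `S`:
its points are distinct points of `S`, consecutive segments are pairwise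
non-crossing, and no segment passes through a point of `S` other than its two
endpoints. -/
def IsNCPathList (S : Finset Pt) (l : List Pt) : Prop :=
  l.Nodup ∧ (∀ x ∈ l, x ∈ S) ∧ NoncrossingList l ∧
  ∀ i : ℕ, ∀ h : i + 1 < l.length, ∀ p ∈ S,
    p ∈ segment ℝ (l.get ⟨i, by omega⟩) (l.get ⟨i + 1, h⟩) →
      p = l.get ⟨i, by omega⟩ ∨ p = l.get ⟨i + 1, h⟩

/-- The number of non-crossing paths with vertices in `S` (including the empty
path and one-vertex paths); a path is identified with its reversal. -/
noncomputable def pathCount (S : Finset Pt) : ℕ :=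
  {P : Set (List Pt) | ∃ l : List Pt, IsNCPathList S l ∧ P = {l, l.reverse}}.ncard

/-- `S` is in convex position: every point of `S` is an extreme point. -/
def ConvexPos (S : Finset Pt) : Prop :=
  ∀ p ∈ S, p ∉ convexHull ℝ ((↑S : Set Pt) \ {p})

namespace NCH15

theorem get_cons_succ' (a : Pt) (l : List Pt) (n : ℕ) (h : n + 1 < (a :: l).length) :
    (a :: l).get ⟨n + 1, h⟩ = l.get ⟨n, by simpa using h⟩ := rfl

/-- Affine-ness of a scalar function, in segment-combination form. -/
def IsAff (A : Pt → ℝ) : Prop :=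
  ∀ p q : Pt, ∀ a b : ℝ, a + b = 1 → A (a • p + b • q) = a * A p + b * A q

theorem isAff_affine (φ : Pt →ᵃ[ℝ] ℝ) : IsAff φ := by
  intro p q a b hab
  have h1 : a • p + b • q = AffineMap.lineMap p q b := by
    rw [AffineMap.lineMap_apply_module]
    have : 1 - b = a := by linarith
    rw [this]
  rw [h1, AffineMap.apply_lineMap, AffineMap.lineMap_apply_module]
  simp only [smul_eq_mul]
  have : a = 1 - b := by linarith
  subst this; ring

theorem isAff_comb (φ ψ : Pt →ᵃ[ℝ] ℝ) (c₁ c₂ c₃ : ℝ) :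
    IsAff (fun p => c₁ * φ p + c₂ * ψ p + c₃) := by
  intro p q a b hab
  simp only
  rw [isAff_affine φ p q a b hab, isAff_affine ψ p q a b hab]
  have : a = 1 - b := by linarith
  subst this; ring

section SegLemmas

variable {A G : Pt → ℝ} (hA : IsAff A)

theorem mem_seg_decomp {x p q : Pt} (hx : x ∈ segment ℝ p q) :
    ∃ a b : ℝ, 0 ≤ a ∧ 0 ≤ b ∧ a + b = 1 ∧ x = a • p + b • q := by
  obtain ⟨a, b, ha, hb, hab, h⟩ := hx
  exact ⟨a, b, ha, hb, hab, h.symm⟩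

include hA in
theorem seg_val {x p q : Pt} (hx : x ∈ segment ℝ p q) :
    ∃ a b : ℝ, 0 ≤ a ∧ 0 ≤ b ∧ a + b = 1 ∧ A x = a * A p + b * A q := by
  obtain ⟨a, b, ha, hb, hab, h⟩ := mem_seg_decomp hx
  exact ⟨a, b, ha, hb, hab, by rw [h, hA p q a b hab]⟩

include hA in
theorem seg_nonpos {x p q : Pt} (hx : x ∈ segment ℝ p q) (hp : A p ≤ 0) (hq : A q ≤ 0) :
    A x ≤ 0 := by
  obtain ⟨a, b, ha, hb, hab, h⟩ := seg_val hA hx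
  nlinarith

include hA in
theorem seg_neg {x p q : Pt} (hx : x ∈ segment ℝ p q) (hp : A p < 0) (hq : A q < 0) :
    A x < 0 := by
  obtain ⟨a, b, ha, hb, hab, h⟩ := seg_val hA hx
  rcases eq_or_lt_of_le ha with h0 | h0
  · have : b = 1 := by linarith
    rw [h, ← h0, this]; simpa
  · nlinarith

include hA in
theorem seg_zero {x p q : Pt} (hx : x ∈ segment ℝ p q) (hp : A p = 0) (hq : A q = 0) :
    A x = 0 := by
  obtain ⟨a, b, ha, hb, hab, h⟩ := seg_val hA hx
  rw [h, hp, hq]; ring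

include hA in
theorem seg_between {x p q : Pt} (hx : x ∈ segment ℝ p q) :
    min (A p) (A q) ≤ A x ∧ A x ≤ max (A p) (A q) := by
  obtain ⟨a, b, ha, hb, hab, h⟩ := seg_val hA hx
  have h1 : min (A p) (A q) ≤ A p := min_le_left _ _
  have h2 : min (A p) (A q) ≤ A q := min_le_right _ _
  have h3 : A p ≤ max (A p) (A q) := le_max_left _ _
  have h4 : A q ≤ max (A p) (A q) := le_max_right _ _
  have e1 : a * min (A p) (A q) + b * min (A p) (A q) = min (A p) (A q) := by
    rw [← add_mul, hab, one_mul]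
  have e2 : a * max (A p) (A q) + b * max (A p) (A q) = max (A p) (A q) := by
    rw [← add_mul, hab, one_mul]
  constructor
  · nlinarith [mul_le_mul_of_nonneg_left h1 ha, mul_le_mul_of_nonneg_left h2 hb]
  · nlinarith [mul_le_mul_of_nonneg_left h3 ha, mul_le_mul_of_nonneg_left h4 hb]

include hA in
/-- If `A p = 0`, `A q ≠ 0` then the only point of the segment on `{A = 0}` is `p`. -/
theorem seg_endpt {x p q : Pt} (hx : x ∈ segment ℝ p q) (hxA : A x = 0)
    (hp : A p = 0) (hq : A q ≠ 0) : x = p := by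
  obtain ⟨a, b, ha, hb, hab, h⟩ := mem_seg_decomp hx
  have hv : A x = a * A p + b * A q := by rw [h, hA p q a b hab]
  have hb0 : b = 0 := by
    rcases mul_eq_zero.mp (by nlinarith : b * A q = 0) with h' | h'
    · exact h'
    · exact absurd h' hq
  have ha1 : a = 1 := by linarith
  rw [h, hb0, ha1]
  simp

include hA in
/-- On a segment from `{A > 0}` to `{A = 0}`, only the endpoint is in `{A ≤ 0}`. -/
theorem seg_pos_endpt {x p q : Pt} (hx : x ∈ segment ℝ p q) (hxA : A x ≤ 0)
    (hp : 0 < A p) (hq : A q = 0) : x = q := by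
  obtain ⟨a, b, ha, hb, hab, h⟩ := mem_seg_decomp hx
  have hv : A x = a * A p + b * A q := by rw [h, hA p q a b hab]
  have ha0 : a = 0 := by nlinarith
  have hb1 : b = 1 := by linarith
  rw [h, ha0, hb1]
  simp

end SegLemmas

/-- Lists of length ≤ 2 are non-crossing. -/
theorem ncl_short (l : List Pt) (h : l.length ≤ 2) : NoncrossingList l := by
  constructor
  · intro i hi; omega
  · intro i j hij hj; omega

theorem ncl_cons (v x : Pt) (l : List Pt)
    (h : NoncrossingList (x :: l)) (hnd : (x :: l).Nodup)
    (H : ∀ i : ℕ, ∀ hi : i + 1 < (x :: l).length,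
      segment ℝ v x ∩
        segment ℝ ((x :: l).get ⟨i, by omega⟩) ((x :: l).get ⟨i + 1, hi⟩) ⊆ {x}) :
    NoncrossingList (v :: x :: l) := by
  obtain ⟨h1, h2⟩ := h
  constructor
  · intro i hi
    rcases i with _ | i
    · apply Set.Subset.antisymm
      · exact H 0 (by simp only [List.length_cons] at hi ⊢; omega)
      · intro z hz
        simp only [Set.mem_singleton_iff] at hz
        rw [hz]
        exact ⟨right_mem_segment ℝ v x, left_mem_segment ℝ x _⟩
    · exact h1 i (by simp only [List.length_cons] at hi ⊢; omega)
  · intro i j hij hj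
    rcases i with _ | i
    · rcases j with _ | j
      · omega
      · have hj' : j + 1 < (x :: l).length := by
          simp only [List.length_cons] at hj ⊢; omega
        have hsub := H j hj'
        have hj1 : 1 ≤ j := by omega
        have hxnot : x ∉ segment ℝ ((x :: l).get ⟨j, by omega⟩) ((x :: l).get ⟨j + 1, hj'⟩) := by
          intro hmem
          rcases eq_or_lt_of_le hj1 with he | hl
          · have he' : j = 1 := he.symm
            subst he'
            have hcc := h1 0 (by simp only [List.length_cons] at hj' ⊢; omega)
            have hx2 : x ∈ segment ℝ ((x :: l).get ⟨0, by simp⟩) ((x :: l).get ⟨1, by omega⟩) :=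
              left_mem_segment ℝ _ _
            have hxin : x ∈ ({(x :: l).get ⟨1, by omega⟩} : Set Pt) := by
              rw [← hcc]; exact ⟨hx2, hmem⟩
            simp only [Set.mem_singleton_iff] at hxin
            have hxl : x ∉ l := (List.nodup_cons.mp hnd).1
            rw [get_cons_succ'] at hxin
            exact hxl (hxin ▸ l.get_mem _)
          · have hdisj := h2 0 j hl hj'
            have hx2 : x ∈ segment ℝ ((x :: l).get ⟨0, by simp⟩) ((x :: l).get ⟨1, by omega⟩) :=
              left_mem_segment ℝ _ _
            have : x ∈ (∅ : Set Pt) := by rw [← hdisj]; exact ⟨hx2, hmem⟩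
            exact this
        ext z
        simp only [Set.mem_inter_iff, Set.mem_empty_iff_false, iff_false, not_and]
        intro hz1 hz2
        rw [get_cons_succ' v (x :: l) (j+1), get_cons_succ' v (x :: l) j] at hz2
        have hzx : z ∈ ({x} : Set Pt) := hsub ⟨hz1, hz2⟩
        simp only [Set.mem_singleton_iff] at hzx
        rw [hzx] at hz2
        exact hxnot hz2
    · rcases j with _ | j
      · omega
      · exact h2 i j (by omega) (by simp only [List.length_cons] at hj ⊢; omega)


theorem H1_master {A : Pt → ℝ} (hA : IsAff A) (v x : Pt) (l : List Pt)
    (hv : 0 < A v) (hx : A x = 0)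
    (hall : ∀ p ∈ x :: l, A p ≤ 0) :
    ∀ i : ℕ, ∀ hi : i + 1 < (x :: l).length,
      segment ℝ v x ∩
        segment ℝ ((x :: l).get ⟨i, by omega⟩) ((x :: l).get ⟨i + 1, hi⟩) ⊆ {x} := by
  intro i hi z hz
  obtain ⟨hz1, hz2⟩ := hz
  have h1 : A ((x :: l).get ⟨i, by omega⟩) ≤ 0 := hall _ (List.get_mem _ _)
  have h2 : A ((x :: l).get ⟨i + 1, hi⟩) ≤ 0 := hall _ (List.get_mem _ _)
  have hzA : A z ≤ 0 := seg_nonpos hA hz2 h1 h2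
  exact seg_pos_endpt hA hz1 hzA hv hx

theorem H2_master {A G : Pt → ℝ} (hA : IsAff A) (hG : IsAff G) (v x : Pt) (l : List Pt)
    (hv : A v = 0) (hx : A x = 0)
    (hsafe : ∀ i : ℕ, ∀ hi : i + 1 < (x :: l).length,
      ∀ z ∈ segment ℝ ((x :: l).get ⟨i, by omega⟩) ((x :: l).get ⟨i + 1, hi⟩),
        A z = 0 → z = x ∨ G z < min (G v) (G x) ∨ max (G v) (G x) < G z) :
    ∀ i : ℕ, ∀ hi : i + 1 < (x :: l).length,
      segment ℝ v x ∩
        segment ℝ ((x :: l).get ⟨i, by omega⟩) ((x :: l).get ⟨i + 1, hi⟩) ⊆ {x} := by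
  intro i hi z hz
  obtain ⟨hz1, hz2⟩ := hz
  have hzA : A z = 0 := seg_zero hA hz1 hv hx
  have hbet := seg_between hG hz1
  rcases hsafe i hi z hz2 hzA with h | h | h
  · exact h
  · exfalso; linarith [hbet.1]
  · exfalso; linarith [hbet.2]

/-- Construction of a second affine coordinate separating points together with `f`. -/
theorem exists_g (f : Pt →ᵃ[ℝ] ℝ) (hf : f.linear ≠ 0) :
    ∃ g : Pt →ᵃ[ℝ] ℝ, ∀ p q : Pt, f p = f q → g p = g q → p = q := by
  classical
  set E : Fin 2 → Pt := fun i => EuclideanSpace.single i 1 with hE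
  set c0 : ℝ := f.linear (E 0) with hc0
  set c1 : ℝ := f.linear (E 1) with hc1
  have hdecomp : ∀ d : Pt, d = d 0 • E 0 + d 1 • E 1 := by
    intro d
    ext i
    fin_cases i <;> simp [hE, EuclideanSpace.single_apply]
  have hflin : ∀ d : Pt, f.linear d = d 0 * c0 + d 1 * c1 := by
    intro d
    conv_lhs => rw [hdecomp d]
    rw [map_add, map_smul, map_smul]
    simp [smul_eq_mul, hc0, hc1]
  have hc : (0:ℝ) < c0 ^ 2 + c1 ^ 2 := by
    rcases eq_or_ne c0 0 with h0 | h0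
    · rcases eq_or_ne c1 0 with h1 | h1
      · exfalso
        apply hf
        ext d
        rw [hflin d, h0, h1]
        simp
      · positivity
    · positivity
  have hgadd : ∀ p q : Pt, c1 * (p + q) 0 - c0 * (p + q) 1 =
      (c1 * p 0 - c0 * p 1) + (c1 * q 0 - c0 * q 1) := by
    intro p q; simp [PiLp.add_apply]; ring
  have hgsmul : ∀ (r : ℝ) (p : Pt), c1 * (r • p) 0 - c0 * (r • p) 1 =
      r * (c1 * p 0 - c0 * p 1) := by
    intro r p; simp [PiLp.smul_apply, smul_eq_mul]; ring
  set glin : Pt →ₗ[ℝ] ℝ :=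
    { toFun := fun p => c1 * p 0 - c0 * p 1
      map_add' := hgadd
      map_smul' := fun r p => by simpa using hgsmul r p } with hglin
  refine ⟨glin.toAffineMap, ?_⟩
  intro p q hfpq hgpq
  have hsub : ∀ (φ : Pt →ᵃ[ℝ] ℝ), φ p = φ q → φ.linear (p - q) = 0 := by
    intro φ h
    have h0 := φ.map_vadd q (p - q)
    simp only [vadd_eq_add, sub_add_cancel] at h0
    rw [h] at h0
    linarith
  have h1 : f.linear (p - q) = 0 := hsub f hfpq
  have h2 : glin (p - q) = 0 := by
    have := hsub glin.toAffineMap hgpq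
    simpa using this
  rw [hflin] at h1
  have h2' : c1 * (p - q) 0 - c0 * (p - q) 1 = 0 := h2
  have hd0 : (p - q) 0 = 0 := by
    have key : (p - q) 0 * (c0 ^ 2 + c1 ^ 2) = 0 := by linear_combination c0 * h1 + c1 * h2'
    rcases mul_eq_zero.mp key with h | h
    · exact h
    · exact absurd h (by linarith)
  have hd1 : (p - q) 1 = 0 := by
    have key : (p - q) 1 * (c0 ^ 2 + c1 ^ 2) = 0 := by linear_combination c1 * h1 - c0 * h2'
    rcases mul_eq_zero.mp key with h | h
    · exact h
    · exact absurd h (by linarith)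
  have hpq : p - q = 0 := by
    ext i
    fin_cases i
    · simpa using hd0
    · simpa using hd1
  exact sub_eq_zero.mp hpq


section Geometry

variable (f g : Pt →ᵃ[ℝ] ℝ)

/-- slope-like key of upper point `b` as seen from apex `q` (angle descending ↔ `kap` ascending). -/
noncomputable def kap (q b : Pt) : ℝ := (g b - g q) / f b

/-- cross-product functional: affine in `p`; for upper `p` its sign compares angles. -/
noncomputable def crossF (q b : Pt) : Pt → ℝ :=
  fun p => (g b - g q) * f p - f b * (g p - g q)

theorem isAff_crossF (q b : Pt) : IsAff (crossF f g q b) := by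
  intro p p' a a' hab
  unfold crossF
  rw [isAff_affine f p p' a a' hab, isAff_affine g p p' a a' hab]
  have : a = 1 - a' := by linarith
  subst this; ring

theorem crossF_upper {b p : Pt} (q : Pt) (hb : 0 < f b) (hp : 0 < f p) :
    crossF f g q b p = f b * f p * (kap f g q b - kap f g q p) := by
  unfold crossF kap
  field_simp

theorem crossF_self_b (q b : Pt) : crossF f g q b b = 0 := by simp only [crossF]; ring

theorem crossF_self_q {q : Pt} (b : Pt) (hq : f q = 0) : crossF f g q b q = 0 := by
  simp only [crossF]; rw [hq]; ring

theorem crossF_line {p : Pt} (q b : Pt) (hp : f p = 0) :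
    crossF f g q b p = - (f b * (g p - g q)) := by
  unfold crossF; rw [hp]; ring

theorem crossF_nonpos {b p : Pt} (q : Pt) (hb : 0 < f b) (hp : 0 < f p)
    (h : kap f g q b ≤ kap f g q p) : crossF f g q b p ≤ 0 := by
  rw [crossF_upper f g q hb hp]
  have h2 : kap f g q b - kap f g q p ≤ 0 := by linarith
  exact mul_nonpos_of_nonneg_of_nonpos (mul_pos hb hp).le h2

theorem crossF_neg {b p : Pt} (q : Pt) (hb : 0 < f b) (hp : 0 < f p)
    (h : kap f g q b < kap f g q p) : crossF f g q b p < 0 := by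
  rw [crossF_upper f g q hb hp]
  have h2 : kap f g q b - kap f g q p < 0 := by linarith
  exact mul_neg_of_pos_of_neg (mul_pos hb hp) h2

theorem crossF_zero {b p : Pt} (q : Pt) (hb : 0 < f b) (hp : 0 < f p)
    (h : kap f g q b = kap f g q p) : crossF f g q b p = 0 := by
  rw [crossF_upper f g q hb hp, h]
  ring

theorem crossF_pos {b p : Pt} (q : Pt) (hb : 0 < f b) (hp : 0 < f p)
    (h : kap f g q p < kap f g q b) : 0 < crossF f g q b p := by
  rw [crossF_upper f g q hb hp]
  have h2 : 0 < kap f g q b - kap f g q p := by linarith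
  exact mul_pos (mul_pos hb hp) h2

theorem crossF_line_neg {p : Pt} (q b : Pt) (hb : 0 < f b) (hp : f p = 0)
    (hg : g q < g p) : crossF f g q b p < 0 := by
  rw [crossF_line f g q b hp]
  nlinarith

theorem crossF_line_pos {p : Pt} (q b : Pt) (hb : 0 < f b) (hp : f p = 0)
    (hg : g p < g q) : 0 < crossF f g q b p := by
  rw [crossF_line f g q b hp]
  nlinarith

variable (hsep : ∀ p q : Pt, f p = f q → g p = g q → p = q)

include hsep in
/-- a point on the critical line through apex `q` and also on `{f = 0}` is `q` itself. -/
theorem crossline_line_eq {z : Pt} (q b : Pt) (hb : 0 < f b) (hq : f q = 0)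
    (hz : crossF f g q b z = 0) (hzf : f z = 0) : z = q := by
  rw [crossF_line f g q b hzf] at hz
  have : g z = g q := by
    rcases mul_eq_zero.mp (by linarith : f b * (g z - g q) = 0) with h | h
    · exact absurd h (by linarith)
    · linarith
  exact hsep z q (by rw [hzf, hq]) this

include hsep in
theorem upper_eq_of_kap_f {x y : Pt} (q : Pt) (hx : 0 < f x) (hy : 0 < f y)
    (hk : kap f g q x = kap f g q y) (hf : f x = f y) : x = y := by
  apply hsep x y hf
  unfold kap at hk
  rw [div_eq_div_iff (ne_of_gt hx) (ne_of_gt hy)] at hk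
  rw [← hf] at hk
  have := mul_right_cancel₀ (ne_of_gt hx) hk
  linarith

include hsep in
/-- two points on the critical line with the same `f`-value coincide. -/
theorem crossline_f_inj {z z' : Pt} (q b : Pt) (hb : 0 < f b)
    (hz : crossF f g q b z = 0) (hz' : crossF f g q b z' = 0) (hf : f z = f z') : z = z' := by
  apply hsep z z' hf
  unfold crossF at hz hz'
  -- (g b - g q) * f z = f b * (g z - g q) and same for z'
  have h1 : (g b - g q) * f z = f b * (g z - g q) := by linarith
  have h2 : (g b - g q) * f z' = f b * (g z' - g q) := by linarith
  rw [hf] at h1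
  have : f b * (g z - g q) = f b * (g z' - g q) := by linarith
  have := mul_left_cancel₀ (by linarith : f b ≠ 0) this
  linarith

end Geometry


/-- index-split of the segments of `u ++ w`. -/
theorem seg_cases (u w : List Pt) (i : ℕ) (hi : i + 1 < (u ++ w).length) :
    (∃ h : i + 1 < u.length,
      (u ++ w).get ⟨i, by omega⟩ = u.get ⟨i, by omega⟩ ∧
      (u ++ w).get ⟨i + 1, hi⟩ = u.get ⟨i + 1, h⟩) ∨
    (∃ h1 : i < u.length, ∃ h2 : 0 < w.length, i + 1 = u.length ∧
      (u ++ w).get ⟨i, by omega⟩ = u.get ⟨i, h1⟩ ∧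
      (u ++ w).get ⟨i + 1, hi⟩ = w.get ⟨0, h2⟩) ∨
    (∃ j, ∃ h : j + 1 < w.length, i = u.length + j ∧
      (u ++ w).get ⟨i, by omega⟩ = w.get ⟨j, by omega⟩ ∧
      (u ++ w).get ⟨i + 1, hi⟩ = w.get ⟨j + 1, h⟩) := by
  have hlen : (u ++ w).length = u.length + w.length := by simp
  rcases lt_trichotomy (i + 1) u.length with h | h | h
  · left
    refine ⟨h, ?_, ?_⟩
    · simp only [List.get_eq_getElem]; exact List.getElem_append_left (by omega)
    · simp only [List.get_eq_getElem]; exact List.getElem_append_left h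
  · right; left
    refine ⟨by omega, by omega, h.symm ▸ rfl, ?_, ?_⟩
    · simp only [List.get_eq_getElem]; exact List.getElem_append_left (by omega)
    · have : (u ++ w).get ⟨i + 1, hi⟩ = w.get ⟨i + 1 - u.length, by omega⟩ := by
        simp only [List.get_eq_getElem]; exact List.getElem_append_right (by omega)
      rw [this]
      congr 1
      ext
      simp; omega
  · right; right
    refine ⟨i - u.length, by omega, by omega, ?_, ?_⟩
    · have : (u ++ w).get ⟨i, by omega⟩ = w.get ⟨i - u.length, by omega⟩ := by
        simp only [List.get_eq_getElem]; exact List.getElem_append_right (by omega)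
      rw [this]
    · have : (u ++ w).get ⟨i + 1, hi⟩ = w.get ⟨i + 1 - u.length, by omega⟩ := by
        simp only [List.get_eq_getElem]; exact List.getElem_append_right (by omega)
      rw [this]
      congr 1
      ext
      simp; omega

section Helpers

variable {f : Pt →ᵃ[ℝ] ℝ}

/-- SegSafe helper, version where the head `x` sits at the top `G`-boundary. -/
theorem segsafeA {A G : Pt → ℝ} (hA : IsAff A) (hG : IsAff G) (x : Pt) (hi' : ℝ)
    (hxA : A x = 0) (hxG : G x = hi')
    (hinj : ∀ z z' : Pt, A z = 0 → A z' = 0 → G z = G z' → z = z')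
    (p₁ p₂ : Pt) (h₁ : A p₁ ≤ 0) (h₂ : A p₂ ≤ 0)
    (e₁ : A p₁ = 0 → p₁ = x ∨ hi' < G p₁) (e₂ : A p₂ = 0 → p₂ = x ∨ hi' < G p₂) :
    ∀ z ∈ segment ℝ p₁ p₂, A z = 0 → z = x ∨ hi' < G z := by
  intro z hz hzA
  rcases eq_or_lt_of_le h₁ with hz1 | hz1
  · rcases eq_or_lt_of_le h₂ with hz2 | hz2
    · have hbet := seg_between hG hz
      have key : hi' ≤ G p₁ ∨ p₁ = x := by
        rcases e₁ hz1 with he | he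
        · right; exact he
        · left; exact he.le
      have key2 : hi' ≤ G p₂ ∨ p₂ = x := by
        rcases e₂ hz2 with he | he
        · right; exact he
        · left; exact he.le
      have hG1 : hi' ≤ G p₁ := by
        rcases key with h | h
        · exact h
        · rw [h, hxG]
      have hG2 : hi' ≤ G p₂ := by
        rcases key2 with h | h
        · exact h
        · rw [h, hxG]
      have hzge : hi' ≤ G z := le_trans (le_min hG1 hG2) hbet.1
      rcases eq_or_lt_of_le hzge with hb | hb
      · left; exact hinj z x hzA hxA (by rw [hxG, ← hb])
      · right; exact hb
    · have hzp : z = p₁ := seg_endpt hA hz hzA hz1 (by linarith)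
      rcases e₁ hz1 with he | he
      · left; rw [hzp, he]
      · right; rw [hzp]; exact he
  · rcases eq_or_lt_of_le h₂ with hz2 | hz2
    · have hzp : z = p₂ := seg_endpt hA (segment_symm ℝ p₁ p₂ ▸ hz) hzA hz2 (by linarith)
      rcases e₂ hz2 with he | he
      · left; rw [hzp, he]
      · right; rw [hzp]; exact he
    · exfalso
      have : A z < 0 := seg_neg hA hz hz1 hz2
      linarith

/-- SegSafe helper, version where the head `x` sits at the bottom `G`-boundary. -/
theorem segsafeB {A G : Pt → ℝ} (hA : IsAff A) (hG : IsAff G) (x : Pt) (lo hi' : ℝ)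
    (hxA : A x = 0) (hxG : G x = lo)
    (hinj : ∀ z z' : Pt, A z = 0 → A z' = 0 → G z = G z' → z = z')
    (p₁ p₂ : Pt) (h₁ : A p₁ ≤ 0) (h₂ : A p₂ ≤ 0)
    (e₁ : A p₁ = 0 → p₁ = x ∨ G p₁ < lo ∨ hi' < G p₁)
    (e₂ : A p₂ = 0 → p₂ = x ∨ G p₂ < lo ∨ hi' < G p₂)
    (hpair : A p₁ = 0 → A p₂ = 0 → (G p₁ ≤ lo ∧ G p₂ ≤ lo) ∨ (hi' < G p₁ ∧ hi' < G p₂)) :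
    ∀ z ∈ segment ℝ p₁ p₂, A z = 0 → z = x ∨ G z < lo ∨ hi' < G z := by
  intro z hz hzA
  rcases eq_or_lt_of_le h₁ with hz1 | hz1
  · rcases eq_or_lt_of_le h₂ with hz2 | hz2
    · have hbet := seg_between hG hz
      rcases hpair hz1 hz2 with ⟨ha, hb⟩ | ⟨ha, hb⟩
      · have hle : G z ≤ lo := le_trans hbet.2 (max_le ha hb)
        rcases eq_or_lt_of_le hle with hb' | hb'
        · left; exact hinj z x hzA hxA (by rw [hxG, hb'])
        · right; left; exact hb'
      · right; right
        calc hi' < min (G p₁) (G p₂) := lt_min ha hb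
        _ ≤ G z := hbet.1
    · have hzp : z = p₁ := seg_endpt hA hz hzA hz1 (by linarith)
      rcases e₁ hz1 with he | he
      · left; rw [hzp, he]
      · rw [hzp]; right; exact he
  · rcases eq_or_lt_of_le h₂ with hz2 | hz2
    · have hzp : z = p₂ := seg_endpt hA (segment_symm ℝ p₁ p₂ ▸ hz) hzA hz2 (by linarith)
      rcases e₂ hz2 with he | he
      · left; rw [hzp, he]
      · rw [hzp]; right; exact he
    · exfalso
      have : A z < 0 := seg_neg hA hz hz1 hz2
      linarith

end Helpers


section Orders

variable (f g : Pt →ᵃ[ℝ] ℝ)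

open scoped Classical in
/-- selection order: `kap` ascending, then `f` ascending. -/
noncomputable def selLe (q x y : Pt) : Bool :=
  decide (kap f g q x < kap f g q y ∨ (kap f g q x = kap f g q y ∧ f x ≤ f y))

open scoped Classical in
/-- visiting order inside a diving group: `kap` ascending, then `f` descending. -/
noncomputable def visLe (q x y : Pt) : Bool :=
  decide (kap f g q x < kap f g q y ∨ (kap f g q x = kap f g q y ∧ f y ≤ f x))

/-- strict selection order. -/
def selLt (q x y : Pt) : Prop :=
  kap f g q x < kap f g q y ∨ (kap f g q x = kap f g q y ∧ f x < f y)

/-- strict visiting order. -/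
def visLt (q x y : Pt) : Prop :=
  kap f g q x < kap f g q y ∨ (kap f g q x = kap f g q y ∧ f y < f x)

theorem selLe_iff (q x y : Pt) : selLe f g q x y = true ↔
    (kap f g q x < kap f g q y ∨ (kap f g q x = kap f g q y ∧ f x ≤ f y)) := by
  simp [selLe]

theorem visLe_iff (q x y : Pt) : visLe f g q x y = true ↔
    (kap f g q x < kap f g q y ∨ (kap f g q x = kap f g q y ∧ f y ≤ f x)) := by
  simp [visLe]

theorem selLe_trans (q : Pt) : ∀ a b c : Pt,
    selLe f g q a b = true → selLe f g q b c = true → selLe f g q a c = true := by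
  intro a b c hab hbc
  rw [selLe_iff] at *
  rcases hab with h | ⟨h1, h2⟩ <;> rcases hbc with h' | ⟨h1', h2'⟩
  · left; linarith
  · left; linarith
  · left; linarith
  · right; exact ⟨by linarith, by linarith⟩

theorem selLe_total (q : Pt) : ∀ a b : Pt,
    (selLe f g q a b || selLe f g q b a) = true := by
  intro a b
  rw [Bool.or_eq_true, selLe_iff, selLe_iff]
  rcases lt_trichotomy (kap f g q a) (kap f g q b) with h | h | h
  · left; left; exact h
  · rcases le_total (f a) (f b) with h' | h'
    · left; right; exact ⟨h, h'⟩
    · right; right; exact ⟨h.symm, h'⟩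
  · right; left; exact h

theorem visLe_trans (q : Pt) : ∀ a b c : Pt,
    visLe f g q a b = true → visLe f g q b c = true → visLe f g q a c = true := by
  intro a b c hab hbc
  rw [visLe_iff] at *
  rcases hab with h | ⟨h1, h2⟩ <;> rcases hbc with h' | ⟨h1', h2'⟩
  · left; linarith
  · left; linarith
  · left; linarith
  · right; exact ⟨by linarith, by linarith⟩

theorem visLe_total (q : Pt) : ∀ a b : Pt,
    (visLe f g q a b || visLe f g q b a) = true := by
  intro a b
  rw [Bool.or_eq_true, visLe_iff, visLe_iff]
  rcases lt_trichotomy (kap f g q a) (kap f g q b) with h | h | h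
  · left; left; exact h
  · rcases le_total (f a) (f b) with h' | h'
    · right; right; exact ⟨h.symm, h'⟩
    · left; right; exact ⟨h, h'⟩
  · right; left; exact h

variable (hsep : ∀ p q : Pt, f p = f q → g p = g q → p = q)

include hsep in
theorem sort_pairwise_sel (q : Pt) (B : List Pt) (hf : ∀ b ∈ B, 0 < f b) (hnd : B.Nodup) :
    (B.mergeSort (selLe f g q)).Pairwise (selLt f g q) := by
  have hs := List.pairwise_mergeSort (le := selLe f g q) (selLe_trans f g q)
    (selLe_total f g q) B
  have hnd' : (B.mergeSort (selLe f g q)).Nodup := (List.mergeSort_perm B _).nodup_iff.mpr hnd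
  have := hs.and hnd'
  refine this.imp_of_mem ?_
  intro a b ha hb ⟨h1, h2⟩
  have hfa : 0 < f a := hf a ((List.mergeSort_perm B _).mem_iff.mp ha)
  have hfb : 0 < f b := hf b ((List.mergeSort_perm B _).mem_iff.mp hb)
  rw [selLe_iff] at h1
  rcases h1 with h | ⟨hk, hle⟩
  · left; exact h
  · right
    refine ⟨hk, ?_⟩
    rcases eq_or_lt_of_le hle with he | he
    · exact absurd (upper_eq_of_kap_f f g hsep q hfa hfb hk he) h2
    · exact he

include hsep in
theorem sort_pairwise_vis (q : Pt) (B : List Pt) (hf : ∀ b ∈ B, 0 < f b) (hnd : B.Nodup) :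
    (B.mergeSort (visLe f g q)).Pairwise (visLt f g q) := by
  have hs := List.pairwise_mergeSort (le := visLe f g q) (visLe_trans f g q)
    (visLe_total f g q) B
  have hnd' : (B.mergeSort (visLe f g q)).Nodup := (List.mergeSort_perm B _).nodup_iff.mpr hnd
  have := hs.and hnd'
  refine this.imp_of_mem ?_
  intro a b ha hb ⟨h1, h2⟩
  have hfa : 0 < f a := hf a ((List.mergeSort_perm B _).mem_iff.mp ha)
  have hfb : 0 < f b := hf b ((List.mergeSort_perm B _).mem_iff.mp hb)
  rw [visLe_iff] at h1
  rcases h1 with h | ⟨hk, hle⟩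
  · left; exact h
  · right
    refine ⟨hk, ?_⟩
    rcases eq_or_lt_of_le hle with he | he
    · exact absurd (upper_eq_of_kap_f f g hsep q hfa hfb hk he.symm) h2
    · exact he

end Orders

section GroupFin

variable (f g : Pt →ᵃ[ℝ] ℝ) (hsep : ∀ p q : Pt, f p = f q → g p = g q → p = q)

include hsep in
/-- the final group: an ascending sorted chain of upper points is non-crossing. -/
theorem group_fin (o : Pt) (γ : List Pt)
    (hγf : ∀ b ∈ γ, 0 < f b)
    (hγs : γ.Pairwise (selLt f g o))
    (hnd : γ.Nodup) :
    NoncrossingList γ := by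
  induction γ with
  | nil => exact ncl_short _ (by simp)
  | cons v γ' ih =>
    have IH : NoncrossingList γ' :=
      ih (fun b hb => hγf b (List.mem_cons_of_mem _ hb)) (hγs.of_cons) (hnd.of_cons)
    rcases γ' with _ | ⟨v', γ''⟩
    · exact ncl_short _ (by simp)
    · -- cons v onto v' :: γ''
      have hvv' : selLt f g o v v' := (List.pairwise_cons.mp hγs).1 v' (by simp)
      have hv : 0 < f v := hγf v (by simp)
      have hv' : 0 < f v' := hγf v' (by simp)
      have hall : ∀ p ∈ v' :: γ'', crossF f g o v' p ≤ 0 := by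
        intro p hp
        rcases List.mem_cons.mp hp with rfl | hp'
        · exact le_of_eq (crossF_self_b f g o p)
        · have hlt : selLt f g o v' p :=
            (List.pairwise_cons.mp hγs.of_cons).1 p hp'
          have hfp : 0 < f p := hγf p (by simp [hp'])
          rcases hlt with h | ⟨h, _⟩
          · exact (crossF_neg f g o hv' hfp h).le
          · exact le_of_eq (crossF_zero f g o hv' hfp h)
      have econd : ∀ p ∈ v' :: γ'', crossF f g o v' p = 0 → p = v' ∨ f v' < f p := by
        intro p hp hA0
        rcases List.mem_cons.mp hp with rfl | hp'
        · left; rfl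
        · right
          have hlt : selLt f g o v' p :=
            (List.pairwise_cons.mp hγs.of_cons).1 p hp'
          have hfp : 0 < f p := hγf p (by simp [hp'])
          rcases hlt with h | ⟨h, hf'⟩
          · exact absurd hA0 (crossF_neg f g o hv' hfp h).ne
          · exact hf'
      apply ncl_cons v v' γ'' IH hnd.of_cons
      rcases hvv' with hlt | ⟨hk, hfvv⟩
      · -- transversal step
        intro i hi
        exact H1_master (isAff_crossF f g o v') v v' γ''
          (crossF_pos f g o hv' hv hlt) (crossF_self_b f g o v') hall i hi
      · -- along-ray step (ascending)
        intro i hi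
        apply H2_master (isAff_crossF f g o v') (isAff_affine f) v v' γ''
          (crossF_zero f g o hv' hv hk.symm) (crossF_self_b f g o v')
        intro i' hi' z hz hzA
        have hres := segsafeA (isAff_crossF f g o v') (isAff_affine f) v' (f v')
          (crossF_self_b f g o v') rfl
          (fun z z' h1 h2 h3 => crossline_f_inj f g hsep o v' hv' h1 h2 h3)
          ((v' :: γ'').get ⟨i', by omega⟩) ((v' :: γ'').get ⟨i' + 1, hi'⟩)
          (hall _ (List.get_mem _ _)) (hall _ (List.get_mem _ _))
          (econd _ (List.get_mem _ _)) (econd _ (List.get_mem _ _)) z hz hzA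
        rcases hres with h | h
        · left; exact h
        · right; right
          have hmx : max (f v) (f v') = f v' := max_eq_right hfvv.le
          rw [hmx]; exact h

end GroupFin


section GroupDive

variable (f g : Pt →ᵃ[ℝ] ℝ) (hsep : ∀ p q : Pt, f p = f q → g p = g q → p = q)

include hsep in
/-- the main group lemma: a `visLt`-sorted group, followed by a dive into the apex `q`
and an arbitrary continuation `rest` satisfying vertex-level conditions, is non-crossing. -/
theorem group_dive (q : Pt) (γ rest : List Pt)
    (hq : f q = 0)
    (hγf : ∀ b ∈ γ, 0 < f b)
    (hγs : γ.Pairwise (visLt f g q))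
    (hrf : ∀ p ∈ rest, 0 ≤ f p)
    (hrline : ∀ p ∈ rest, f p = 0 → g q < g p)
    (hrhead : ∀ p ∈ rest.head?, f p = 0)
    (hrup : ∀ p ∈ rest, 0 < f p → ∀ x ∈ γ, selLt f g q x p)
    (hnd : (γ ++ q :: rest).Nodup)
    (hncl : NoncrossingList (q :: rest)) :
    NoncrossingList (γ ++ q :: rest) := by
  induction γ with
  | nil => simpa using hncl
  | cons v γ' ih =>
    have hv : 0 < f v := hγf v (by simp)
    simp only [List.cons_append] at hnd ⊢
    have hnd' : (γ' ++ q :: rest).Nodup := hnd.of_cons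
    have IH : NoncrossingList (γ' ++ q :: rest) := by
      apply ih (fun b hb => hγf b (by simp [hb])) hγs.of_cons
        (fun p hp hfp x hx => hrup p hp hfp x (by simp [hx])) hnd'
    -- conditions on `rest` vertices w.r.t. a selected point c ∈ v :: γ'
    have hrestA : ∀ c ∈ v :: γ', ∀ p ∈ rest, crossF f g q c p ≤ 0 := by
      intro c hc p hp
      have hcf : 0 < f c := hγf c hc
      rcases eq_or_lt_of_le (hrf p hp) with h0 | h0
      · exact (crossF_line_neg f g q c hcf h0.symm (hrline p hp h0.symm)).le
      · rcases hrup p hp h0 c hc with h | ⟨h, _⟩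
        · exact (crossF_neg f g q hcf h0 h).le
        · exact le_of_eq (crossF_zero f g q hcf h0 h)
    have hrestE : ∀ c ∈ v :: γ', ∀ p ∈ rest, crossF f g q c p = 0 →
        ∀ d ∈ v :: γ', kap f g q d = kap f g q c → f d < f p := by
      intro c hc p hp hA0 d hd hkdc
      have hcf : 0 < f c := hγf c hc
      rcases eq_or_lt_of_le (hrf p hp) with h0 | h0
      · exact absurd hA0 (crossF_line_neg f g q c hcf h0.symm (hrline p hp h0.symm)).ne
      · rcases hrup p hp h0 c hc with h | ⟨h, _⟩
        · exact absurd hA0 (crossF_neg f g q hcf h0 h).ne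
        · -- kap c = kap p, so kap d = kap p; use selLt d p
          rcases hrup p hp h0 d hd with h' | ⟨_, h'⟩
          · exact absurd h' (by rw [hkdc, h]; exact lt_irrefl _)
          · exact h'
    rcases γ' with _ | ⟨v', γ''⟩
    · -- dive step : v :: q :: rest
      apply ncl_cons v q rest hncl hnd'
      intro i hi
      apply H2_master (isAff_crossF f g q v) (isAff_affine f) v q rest
        (crossF_self_b f g q v) (crossF_self_q f g v hq)
      intro i' hi' z hz hzA
      have hmin : min (f v) (f q) = 0 := by rw [hq]; exact min_eq_right hv.le
      have hmax : max (f v) (f q) = f v := by rw [hq]; exact max_eq_left hv.le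
      rw [hmin, hmax]
      rcases i' with _ | i''
      · -- segment [q, rest.head]
        rcases rest with _ | ⟨r0, rest'⟩
        · simp at hi'
        · have hr0 : f r0 = 0 := hrhead r0 (by simp)
          have hz0 : f z = 0 := seg_zero (isAff_affine f) hz hq hr0
          left
          exact crossline_line_eq f g hsep q v hv hq hzA hz0
      · -- deeper segments: both endpoints in rest
        have hp₁ : (q :: rest).get ⟨i'' + 1, by omega⟩ ∈ rest := by
          rw [get_cons_succ']; exact List.get_mem _ _
        have hp₂ : (q :: rest).get ⟨i'' + 1 + 1, hi'⟩ ∈ rest := by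
          rw [get_cons_succ']; exact List.get_mem _ _
        have hres := segsafeB (isAff_crossF f g q v) (isAff_affine f) q 0 (f v)
          (crossF_self_q f g v hq) hq
          (fun z z' h1 h2 h3 => crossline_f_inj f g hsep q v hv h1 h2 h3)
          _ _ (hrestA v (by simp) _ hp₁) (hrestA v (by simp) _ hp₂)
          (fun hA0 => Or.inr (Or.inr (hrestE v (by simp) _ hp₁ hA0 v (by simp) rfl)))
          (fun hA0 => Or.inr (Or.inr (hrestE v (by simp) _ hp₂ hA0 v (by simp) rfl)))
          (fun hA1 hA2 => Or.inr ⟨hrestE v (by simp) _ hp₁ hA1 v (by simp) rfl,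
            hrestE v (by simp) _ hp₂ hA2 v (by simp) rfl⟩)
          z hz hzA
        exact hres
    · -- chain step : v :: v' :: (γ'' ++ q :: rest)
      have hv' : 0 < f v' := hγf v' (by simp)
      have hvv' : visLt f g q v v' := (List.pairwise_cons.mp hγs).1 v' (by simp)
      have hallA : ∀ p ∈ v' :: (γ'' ++ q :: rest), crossF f g q v' p ≤ 0 := by
        intro p hp
        rcases List.mem_cons.mp hp with rfl | hp'
        · exact le_of_eq (crossF_self_b f g q p)
        · rcases List.mem_append.mp hp' with hpu | hpw
          · have hlt : visLt f g q v' p := (List.pairwise_cons.mp hγs.of_cons).1 p hpu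
            have hfp : 0 < f p := hγf p (by simp [hpu])
            rcases hlt with h | ⟨h, _⟩
            · exact (crossF_neg f g q hv' hfp h).le
            · exact le_of_eq (crossF_zero f g q hv' hfp h)
          · rcases List.mem_cons.mp hpw with rfl | hpr
            · exact le_of_eq (crossF_self_q f g v' hq)
            · exact hrestA v' (by simp) p hpr
      apply ncl_cons v v' (γ'' ++ q :: rest) IH hnd'
      rcases hvv' with hlt | ⟨hk, hfvv⟩
      · -- transversal step
        intro i hi
        exact H1_master (isAff_crossF f g q v') v v' (γ'' ++ q :: rest)
          (crossF_pos f g q hv' hv hlt) (crossF_self_b f g q v') hallA i hi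
      · -- along-ray step (descending): f v' < f v
        intro i hi
        apply H2_master (isAff_crossF f g q v') (isAff_affine f) v v' (γ'' ++ q :: rest)
          (crossF_zero f g q hv' hv hk.symm) (crossF_self_b f g q v')
        intro i' hi' z hz hzA
        have hmin : min (f v) (f v') = f v' := min_eq_right hfvv.le
        have hmax : max (f v) (f v') = f v := max_eq_left hfvv.le
        rw [hmin, hmax]
        -- segment split
        have hz' : z ∈ segment ℝ (((v' :: γ'') ++ q :: rest).get ⟨i', by
              simp only [List.cons_append, List.length_cons] at hi' ⊢; omega⟩)
            (((v' :: γ'') ++ q :: rest).get ⟨i' + 1, by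
              simp only [List.cons_append, List.length_cons] at hi' ⊢; omega⟩) := hz
        have hinj' : ∀ z z' : Pt, crossF f g q v' z = 0 → crossF f g q v' z' = 0 →
            f z = f z' → z = z' :=
          fun z z' h1 h2 h3 => crossline_f_inj f g hsep q v' hv' h1 h2 h3
        -- endpoint conditions for u-vertices
        have huA : ∀ p ∈ v' :: γ'', crossF f g q v' p ≤ 0 := by
          intro p hp
          apply hallA p
          rcases List.mem_cons.mp hp with rfl | hp'
          · exact List.mem_cons_self
          · exact List.mem_cons_of_mem _ (List.mem_append_left _ hp')
        have huE : ∀ p ∈ v' :: γ'', crossF f g q v' p = 0 → p = v' ∨ f p < f v' := by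
          intro p hp hA0
          rcases List.mem_cons.mp hp with rfl | hp'
          · left; rfl
          · right
            have hlt : visLt f g q v' p := (List.pairwise_cons.mp hγs.of_cons).1 p hp'
            have hfp : 0 < f p := hγf p (by simp [hp'])
            rcases hlt with h | ⟨_, h⟩
            · exact absurd hA0 (crossF_neg f g q hv' hfp h).ne
            · exact h
        have huLe : ∀ p ∈ v' :: γ'', crossF f g q v' p = 0 → f p ≤ f v' := by
          intro p hp hA0
          rcases huE p hp hA0 with h | h
          · rw [h]
          · exact h.le
        rcases seg_cases (v' :: γ'') (q :: rest) i'
            (by simp only [List.cons_append, List.length_cons, List.length_append] at hi' ⊢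
                omega) with
          ⟨hcase, he1, he2⟩ | ⟨h1, h2, hcase, he1, he2⟩ | ⟨j, hjl, hcase, he1, he2⟩
        · -- both endpoints in the group
          rw [he1, he2] at hz'
          exact segsafeB (isAff_crossF f g q v') (isAff_affine f) v' (f v') (f v)
            (crossF_self_b f g q v') rfl hinj' _ _
            (huA _ (List.get_mem _ _)) (huA _ (List.get_mem _ _))
            (fun h0 => by rcases huE _ (List.get_mem _ _) h0 with h | h
                          · exact Or.inl h
                          · exact Or.inr (Or.inl h))
            (fun h0 => by rcases huE _ (List.get_mem _ _) h0 with h | h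
                          · exact Or.inl h
                          · exact Or.inr (Or.inl h))
            (fun h1' h2' => Or.inl ⟨huLe _ (List.get_mem _ _) h1',
              huLe _ (List.get_mem _ _) h2'⟩)
            z hz' hzA
        · -- bridge [last of group, q]
          rw [he1, he2] at hz'
          exact segsafeB (isAff_crossF f g q v') (isAff_affine f) v' (f v') (f v)
            (crossF_self_b f g q v') rfl hinj' _ _
            (huA _ (List.get_mem _ _)) (le_of_eq (crossF_self_q f g v' hq))
            (fun h0 => by rcases huE _ (List.get_mem _ _) h0 with h | h
                          · exact Or.inl h
                          · exact Or.inr (Or.inl h))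
            (fun _ => Or.inr (Or.inl (by rw [hq]; exact hv')))
            (fun h1' h2' => Or.inl ⟨huLe _ (List.get_mem _ _) h1', by rw [hq]; exact hv'.le⟩)
            z hz' hzA
        · -- both endpoints in q :: rest
          rw [he1, he2] at hz'
          rcases j with _ | j'
          · -- segment [q, rest.head] : entirely on the line {f = 0}
            rcases rest with _ | ⟨r0, rest'⟩
            · simp at hjl
            · have hr0 : f r0 = 0 := hrhead r0 (by simp)
              have hz0 : f z = 0 := seg_zero (isAff_affine f) hz' hq hr0
              right; left
              rw [hz0]; exact hv'
          · -- both endpoints in rest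
            have hp₁ : (q :: rest).get ⟨j' + 1, by omega⟩ ∈ rest := by
              rw [get_cons_succ']; exact List.get_mem _ _
            have hp₂ : (q :: rest).get ⟨j' + 1 + 1, hjl⟩ ∈ rest := by
              rw [get_cons_succ']; exact List.get_mem _ _
            have hEv : ∀ p ∈ rest, crossF f g q v' p = 0 → f v < f p := by
              intro p hp h0
              exact hrestE v' (by simp) p hp h0 v (by simp) hk
            exact segsafeB (isAff_crossF f g q v') (isAff_affine f) v' (f v') (f v)
              (crossF_self_b f g q v') rfl hinj' _ _
              (hrestA v' (by simp) _ hp₁) (hrestA v' (by simp) _ hp₂)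
              (fun h0 => Or.inr (Or.inr (hEv _ hp₁ h0)))
              (fun h0 => Or.inr (Or.inr (hEv _ hp₂ h0)))
              (fun h1' h2' => Or.inr ⟨hEv _ hp₁ h1', hEv _ hp₂ h2'⟩)
              z hz' hzA

end GroupDive


section Run

variable (f g : Pt →ᵃ[ℝ] ℝ)

/-- the path construction: `o` is the previously used line point (apex for the final
group), `QL` the remaining line points (sorted by `g`), `B` the remaining upper points,
`w` the word whose runs of `false`s give the group sizes. -/
noncomputable def run : Pt → List Pt → List Pt → List ℕ → List Pt
  | o, [], B, _w => B.mergeSort (selLe f g o)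
  | _o, [q], B, _w => B.mergeSort (visLe f g q) ++ [q]
  | _o, q₁ :: q₂ :: Q, B, w =>
      let s := B.mergeSort (selLe f g q₁)
      let a := w.headD 0
      (s.take a).mergeSort (visLe f g q₁) ++
        q₁ :: q₂ :: run q₂ Q (s.drop a) w.tail

theorem run_nil (o : Pt) (B : List Pt) (w : List ℕ) :
    run f g o [] B w = B.mergeSort (selLe f g o) := by rw [run]

theorem run_one (o q : Pt) (B : List Pt) (w : List ℕ) :
    run f g o [q] B w = B.mergeSort (visLe f g q) ++ [q] := by rw [run]

theorem run_cons (o q₁ q₂ : Pt) (Q : List Pt) (B : List Pt) (w : List ℕ) :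
    run f g o (q₁ :: q₂ :: Q) B w =
      ((B.mergeSort (selLe f g q₁)).take (w.headD 0)).mergeSort (visLe f g q₁) ++
        q₁ :: q₂ :: run f g q₂ Q
          ((B.mergeSort (selLe f g q₁)).drop (w.headD 0)) w.tail := by rw [run]

/-- head specification of `run`. -/
def HeadP (o : Pt) (QL B out : List Pt) : Prop :=
  ∀ h t, out = h :: t →
    (QL ≠ [] ∧ h = QL.headD o) ∨
    (h ∈ B ∧ 0 < f h ∧ (∀ b ∈ B, kap f g (QL.headD o) h ≤ kap f g (QL.headD o) b) ∧
      (QL = [] → ∀ b ∈ B, kap f g o h = kap f g o b → f h ≤ f b))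

theorem isAff_neg : IsAff (fun p => -(f p)) := by
  intro p q a b hab
  simp only
  rw [isAff_affine f p q a b hab]
  ring

theorem kap_eq_of_crossF_zero {q b p : Pt} (hb : 0 < f b) (hp : 0 < f p)
    (h : crossF f g q b p = 0) : kap f g q b = kap f g q p := by
  rw [crossF_upper f g q hb hp] at h
  rcases mul_eq_zero.mp h with h' | h'
  · exact absurd h' (mul_pos hb hp).ne'
  · linarith

theorem pairwise_take_drop {α : Type*} {R : α → α → Prop} {s : List α} (hs : s.Pairwise R)
    (a : ℕ) : ∀ x ∈ s.take a, ∀ y ∈ s.drop a, R x y := by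
  have h2 := hs
  rw [← List.take_append_drop a s] at h2
  exact fun x hx y hy => (List.pairwise_append.mp h2).2.2 x hx y hy

theorem head_min {α : Type*} {R : α → α → Prop} {l : List α} {c : α} {t : List α}
    (hs : l.Pairwise R) (hl : l = c :: t) : ∀ b ∈ l, b = c ∨ R c b := by
  subst hl
  intro b hb
  rcases List.mem_cons.mp hb with rfl | hb'
  · left; rfl
  · right; exact (List.pairwise_cons.mp hs).1 b hb'

end Run


section RunMain

variable (f g : Pt →ᵃ[ℝ] ℝ) (hsep : ∀ p q : Pt, f p = f q → g p = g q → p = q)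

include hsep in
theorem branch_nil (o : Pt) (B : List Pt) (w : List ℕ)
    (hBf : ∀ b ∈ B, 0 < f b) (hndB : B.Nodup) :
    NoncrossingList (run f g o [] B w) ∧ (run f g o [] B w).Perm ([] ++ B) ∧
      HeadP f g o [] B (run f g o [] B w) := by
  rw [run_nil]
  have hperm : (B.mergeSort (selLe f g o)).Perm B := List.mergeSort_perm B _
  have hf' : ∀ b ∈ B.mergeSort (selLe f g o), 0 < f b :=
    fun b hb => hBf b (hperm.mem_iff.mp hb)
  have hnd' : (B.mergeSort (selLe f g o)).Nodup := hperm.nodup_iff.mpr hndB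
  have hpw := sort_pairwise_sel f g hsep o B hBf hndB
  refine ⟨group_fin f g hsep o _ hf' hpw hnd', by simpa using hperm, ?_⟩
  intro h t heq
  right
  have hhB : h ∈ B := hperm.mem_iff.mp (heq ▸ (List.mem_cons_self (a := h) (l := t)))
  refine ⟨hhB, hBf h hhB, ?_, ?_⟩
  · intro b hb
    rcases head_min hpw heq b (hperm.mem_iff.mpr hb) with rfl | hlt
    · exact le_refl _
    · rcases hlt with h' | ⟨h', _⟩
      · simpa using h'.le
      · simpa using h'.le
  · intro _ b hb hk
    rcases head_min hpw heq b (hperm.mem_iff.mpr hb) with rfl | hlt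
    · exact le_refl _
    · rcases hlt with h' | ⟨_, h'⟩
      · exact absurd hk h'.ne
      · exact h'.le

include hsep in
theorem branch_one (o q : Pt) (B : List Pt) (w : List ℕ)
    (hq : f q = 0) (hBf : ∀ b ∈ B, 0 < f b) (hnd : ([q] ++ B).Nodup) :
    NoncrossingList (run f g o [q] B w) ∧ (run f g o [q] B w).Perm ([q] ++ B) ∧
      HeadP f g o [q] B (run f g o [q] B w) := by
  rw [run_one]
  have hndB : B.Nodup := ((List.nodup_append).mp hnd).2.1
  have hperm : (B.mergeSort (visLe f g q)).Perm B := List.mergeSort_perm B _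
  have hf' : ∀ b ∈ B.mergeSort (visLe f g q), 0 < f b :=
    fun b hb => hBf b (hperm.mem_iff.mp hb)
  have hnd' : (B.mergeSort (visLe f g q)).Nodup := hperm.nodup_iff.mpr hndB
  have hpw := sort_pairwise_vis f g hsep q B hBf hndB
  have houtperm : (B.mergeSort (visLe f g q) ++ [q]).Perm ([q] ++ B) :=
    List.perm_append_comm.trans (hperm.append_left [q])
  have houtnd : (B.mergeSort (visLe f g q) ++ [q]).Nodup := houtperm.nodup_iff.mpr hnd
  refine ⟨?_, houtperm, ?_⟩
  · exact group_dive f g hsep q _ [] hq hf' hpw (by simp) (by simp) (by simp) (by simp)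
      houtnd (ncl_short _ (by simp))
  · intro h t heq
    rcases hms : B.mergeSort (visLe f g q) with _ | ⟨c, γr⟩
    · rw [hms] at heq
      simp at heq
      left
      exact ⟨by simp, by simp [heq.1]⟩
    · rw [hms, List.cons_append] at heq
      have hhc : h = c := (List.cons_eq_cons.mp heq).1.symm
      subst hhc
      right
      have hhB : h ∈ B := hperm.mem_iff.mp (by rw [hms]; simp)
      refine ⟨hhB, hBf h hhB, ?_, by simp⟩
      intro b hb
      rcases head_min hpw hms b (hperm.mem_iff.mpr hb) with rfl | hlt
      · exact le_refl _
      · rcases hlt with h' | ⟨h', _⟩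
        · simpa using h'.le
        · simpa using h'.le

include hsep in
theorem run_main : ∀ (n : ℕ) (QL : List Pt), QL.length ≤ n →
    ∀ (o : Pt) (B : List Pt) (w : List ℕ),
    (∀ q ∈ QL, f q = 0) → QL.Pairwise (fun p p' => g p < g p') →
    (∀ b ∈ B, 0 < f b) → (QL ++ B).Nodup →
    NoncrossingList (run f g o QL B w) ∧ (run f g o QL B w).Perm (QL ++ B) ∧
      HeadP f g o QL B (run f g o QL B w) := by
  intro n
  induction n with
  | zero =>
    intro QL hlen o B w hQf hQg hBf hnd
    have : QL = [] := List.length_eq_zero_iff.mp (by omega)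
    subst this
    exact branch_nil f g hsep o B w hBf (by simpa using hnd)
  | succ n ihn =>
    intro QL hlen o B w hQf hQg hBf hnd
    rcases QL with _ | ⟨q₁, _ | ⟨q₂, Q⟩⟩
    · exact branch_nil f g hsep o B w hBf (by simpa using hnd)
    · exact branch_one f g hsep o q₁ B w (hQf q₁ (by simp)) hBf hnd
    · -- main branch
      have hq₁ : f q₁ = 0 := hQf q₁ (by simp)
      have hq₂ : f q₂ = 0 := hQf q₂ (by simp)
      have hg12 : g q₁ < g q₂ := (List.pairwise_cons.mp hQg).1 q₂ (by simp)
      have hndB : B.Nodup := ((List.nodup_append).mp hnd).2.1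
      set s := B.mergeSort (selLe f g q₁) with hs_def
      set a := w.headD 0 with ha_def
      set γ := (s.take a).mergeSort (visLe f g q₁) with hγ_def
      set Bd := s.drop a with hBd_def
      set w' := w.tail with hw'_def
      have hsperm : s.Perm B := List.mergeSort_perm B _
      have hsf : ∀ b ∈ s, 0 < f b := fun b hb => hBf b (hsperm.mem_iff.mp hb)
      have hsnd : s.Nodup := hsperm.nodup_iff.mpr hndB
      have hspw := sort_pairwise_sel f g hsep q₁ B hBf hndB
      have htakef : ∀ b ∈ s.take a, 0 < f b := fun b hb => hsf b (List.take_subset a s hb)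
      have htakend : (s.take a).Nodup := hsnd.sublist (List.take_sublist a s)
      have hγperm : γ.Perm (s.take a) := List.mergeSort_perm _ _
      have hγf : ∀ b ∈ γ, 0 < f b := fun b hb => htakef b (hγperm.mem_iff.mp hb)
      have hγs : γ.Pairwise (visLt f g q₁) := sort_pairwise_vis f g hsep q₁ _ htakef htakend
      have hsel : ∀ x ∈ s.take a, ∀ y ∈ Bd, selLt f g q₁ x y := pairwise_take_drop hspw a
      have hBdf : ∀ b ∈ Bd, 0 < f b := fun b hb => hsf b (List.drop_subset a s hb)
      have hQf' : ∀ q ∈ Q, f q = 0 := fun q hq' => hQf q (by simp [hq'])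
      have hQg' : Q.Pairwise (fun p p' => g p < g p') := hQg.of_cons.of_cons
      have hndrec : (Q ++ Bd).Nodup := by
        have hsub : (Q ++ Bd).Sublist ((q₁ :: q₂ :: Q) ++ s) := by
          apply List.Sublist.append
          · exact (List.sublist_cons_self q₂ Q).trans (List.sublist_cons_self q₁ _)
          · exact List.drop_sublist a s
        have : ((q₁ :: q₂ :: Q) ++ s).Nodup :=
          ((hsperm.append_left (q₁ :: q₂ :: Q)).nodup_iff).mpr hnd
        exact hsub.nodup this
      obtain ⟨hN, hP, hH⟩ := ihn Q (by simp at hlen; omega) q₂ Bd w' hQf' hQg' hBdf hndrec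
      set rec := run f g q₂ Q Bd w' with hrec_def
      have hrun : run f g o (q₁ :: q₂ :: Q) B w = γ ++ q₁ :: q₂ :: rec := by
        rw [run_cons]
      -- permutation of the output
      have hmid : (γ ++ (Q ++ Bd)).Perm (Q ++ B) := by
        have e1 : (γ ++ (Q ++ Bd)).Perm (s.take a ++ (Q ++ Bd)) := hγperm.append_right _
        have e2 : (s.take a ++ (Q ++ Bd)) = (s.take a ++ Q) ++ Bd := by
          rw [List.append_assoc]
        have e3 : ((s.take a ++ Q) ++ Bd).Perm ((Q ++ s.take a) ++ Bd) :=
          (List.perm_append_comm).append_right _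
        have e4 : ((Q ++ s.take a) ++ Bd) = Q ++ s := by
          rw [List.append_assoc, hBd_def, List.take_append_drop]
        have e5 : (Q ++ s).Perm (Q ++ B) := hsperm.append_left Q
        exact e1.trans (e2 ▸ (e3.trans (e4 ▸ e5)))
      have houtperm : (γ ++ q₁ :: q₂ :: rec).Perm ((q₁ :: q₂ :: Q) ++ B) := by
        have e1 : (γ ++ q₁ :: q₂ :: rec).Perm (γ ++ q₁ :: q₂ :: (Q ++ Bd)) :=
          List.Perm.append_left γ ((hP.cons q₂).cons q₁)
        have e2 : (γ ++ q₁ :: q₂ :: (Q ++ Bd)).Perm (q₁ :: (γ ++ q₂ :: (Q ++ Bd))) :=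
          List.perm_middle
        have e3 : (γ ++ q₂ :: (Q ++ Bd)).Perm (q₂ :: (γ ++ (Q ++ Bd))) := List.perm_middle
        have e4 : (q₁ :: (γ ++ q₂ :: (Q ++ Bd))).Perm
            (q₁ :: q₂ :: (γ ++ (Q ++ Bd))) := e3.cons q₁
        have e5 : (q₁ :: q₂ :: (γ ++ (Q ++ Bd))).Perm (q₁ :: q₂ :: (Q ++ B)) :=
          (hmid.cons q₂).cons q₁
        have e6 : (q₁ :: q₂ :: (Q ++ B)) = (q₁ :: q₂ :: Q) ++ B := by simp
        exact e1.trans (e2.trans (e4.trans (e6 ▸ e5)))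
      have houtnd : (γ ++ q₁ :: q₂ :: rec).Nodup := houtperm.nodup_iff.mpr hnd
      -- vertex facts about rec
      have hrecmem : ∀ p ∈ rec, p ∈ Q ∨ p ∈ Bd := by
        intro p hp
        exact List.mem_append.mp (hP.mem_iff.mp hp)
      have hrecf : ∀ p ∈ rec, 0 ≤ f p := by
        intro p hp
        rcases hrecmem p hp with h | h
        · exact le_of_eq (hQf' p h).symm
        · exact (hBdf p h).le
      have hrecline : ∀ p ∈ rec, f p = 0 → p ∈ Q := by
        intro p hp h0
        rcases hrecmem p hp with h | h
        · exact h
        · exact absurd h0 (hBdf p h).ne'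
      have hQg2 : ∀ p ∈ Q, g q₂ < g p := fun p hp => (List.pairwise_cons.mp hQg.of_cons).1 p hp
      have hQg1 : ∀ p ∈ Q, g q₁ < g p := fun p hp => (List.pairwise_cons.mp hQg).1 p (by simp [hp])
      have hrecnd : rec.Nodup := hP.nodup_iff.mpr hndrec
      -- non-crossing of q₂ :: rec
      have hT1 : NoncrossingList (q₂ :: rec) := by
        rcases hrecc : rec with _ | ⟨h, t⟩
        · exact ncl_short _ (by simp)
        · have hndrec' : (h :: t).Nodup := hrecc ▸ hrecnd
          have hmemrec : ∀ p ∈ h :: t, p ∈ Q ∨ p ∈ Bd := by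
            intro p hp; exact hrecmem p (by rw [hrecc]; exact hp)
          have hfrec : ∀ p ∈ h :: t, 0 ≤ f p := by
            intro p hp; exact hrecf p (by rw [hrecc]; exact hp)
          apply ncl_cons q₂ h t (hrecc ▸ hN) hndrec'
          rcases hH h t hrecc with ⟨hQne, hhd⟩ | ⟨hmem, hfh, hkmin, hcond⟩
          · -- h is the next line point
            rcases Q with _ | ⟨q₃, Q'⟩
            · exact absurd rfl hQne
            · simp only [List.headD_cons] at hhd
              subst hhd
              have hg23 : g q₂ < g h := (List.pairwise_cons.mp hQg.of_cons).1 h (by simp)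
              have hq₃ : f h = 0 := hQf' h (by simp)
              intro i hi
              apply H2_master (A := fun p => -(f p)) (G := fun p => g p) (isAff_neg f)
                (isAff_affine g) q₂ h t (by simp [hq₂]) (by simp [hq₃])
              intro i' hi' z hz hzA
              have hres := segsafeA (A := fun p => -(f p)) (G := fun p => g p) (isAff_neg f)
                (isAff_affine g) h (g h) (by simp [hq₃]) rfl
                (fun z z' h1 h2 h3 => hsep z z' (by simp at h1 h2; rw [h1, h2]) h3)
                _ _ ?_ ?_ ?_ ?_ z hz hzA
              · rcases hres with hcc | hcc
                · left; exact hcc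
                · right; right
                  rw [max_eq_right hg23.le]; exact hcc
              · simp only [neg_nonpos]
                exact hfrec _ (List.get_mem _ _)
              · simp only [neg_nonpos]
                exact hfrec _ (List.get_mem _ _)
              · intro h0
                simp only [neg_eq_zero] at h0
                rcases hmemrec _ (List.get_mem _ _) with hc | hc
                · rcases List.mem_cons.mp hc with hc' | hc'
                  · left; exact hc'
                  · right; exact (List.pairwise_cons.mp hQg').1 _ hc'
                · exact absurd h0 (hBdf _ hc).ne'
              · intro h0
                simp only [neg_eq_zero] at h0
                rcases hmemrec _ (List.get_mem _ _) with hc | hc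
                · rcases List.mem_cons.mp hc with hc' | hc'
                  · left; exact hc'
                  · right; exact (List.pairwise_cons.mp hQg').1 _ hc'
                · exact absurd h0 (hBdf _ hc).ne'
          · -- h is an upper point
            rcases Q with _ | ⟨q₃, Q'⟩
            · -- from-apex ray entry
              simp only [List.headD_nil] at hkmin
              have hcond' := hcond rfl
              have hBd_only : ∀ p ∈ h :: t, p ∈ Bd := by
                intro p hp
                rcases hmemrec p hp with hc | hc
                · exact absurd hc ((List.not_mem_nil (a := p)))
                · exact hc
              have hEp : ∀ p ∈ h :: t, crossF f g q₂ h p ≤ 0 := by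
                intro p hp
                exact crossF_nonpos f g q₂ hfh (hBdf p (hBd_only p hp))
                  (hkmin p (hBd_only p hp))
              have hEe : ∀ p ∈ h :: t, crossF f g q₂ h p = 0 → p = h ∨ f h < f p := by
                intro p hp h0
                have hfp := hBdf p (hBd_only p hp)
                have hkeq := kap_eq_of_crossF_zero f g hfh hfp h0
                rcases eq_or_lt_of_le (hcond' p (hBd_only p hp) hkeq) with he | he
                · left
                  exact (upper_eq_of_kap_f f g hsep q₂ hfh hfp hkeq he).symm
                · right; exact he
              intro i hi
              apply H2_master (A := crossF f g q₂ h) (G := fun p => f p)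
                (isAff_crossF f g q₂ h) (isAff_affine f) q₂ h t
                (crossF_self_q f g h hq₂) (crossF_self_b f g q₂ h)
              intro i' hi' z hz hzA
              have hres := segsafeA (A := crossF f g q₂ h) (G := fun p => f p)
                (isAff_crossF f g q₂ h) (isAff_affine f) h (f h)
                (crossF_self_b f g q₂ h) rfl
                (fun z z' h1 h2 h3 => crossline_f_inj f g hsep q₂ h hfh h1 h2 h3)
                _ _ (hEp _ (List.get_mem _ _)) (hEp _ (List.get_mem _ _))
                (hEe _ (List.get_mem _ _)) (hEe _ (List.get_mem _ _)) z hz hzA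
              rcases hres with hcc | hcc
              · left; exact hcc
              · right; right
                rw [hq₂, max_eq_right hfh.le]; exact hcc
            · -- transversal entry below the next apex q₃
              simp only [List.headD_cons] at hkmin
              have hg23 : g q₂ < g q₃ := (List.pairwise_cons.mp hQg.of_cons).1 q₃ (by simp)
              have hq₃ : f q₃ = 0 := hQf' q₃ (by simp)
              have hall : ∀ p ∈ h :: t, crossF f g q₃ h p ≤ 0 := by
                intro p hp
                rcases List.mem_cons.mp hp with rfl | hp'
                · exact le_of_eq (crossF_self_b f g q₃ p)
                · rcases hmemrec p hp with hc | hc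
                  · rcases List.mem_cons.mp hc with hc' | hc'
                    · rw [hc']; exact le_of_eq (crossF_self_q f g h hq₃)
                    · exact (crossF_line_neg f g q₃ h hfh (hQf' p hc)
                        ((List.pairwise_cons.mp hQg').1 p hc')).le
                  · exact crossF_nonpos f g q₃ hfh (hBdf p hc) (hkmin p hc)
              intro i hi
              exact H1_master (isAff_crossF f g q₃ h) q₂ h t
                (crossF_line_pos f g q₃ h hfh hq₂ hg23) (crossF_self_b f g q₃ h)
                hall i hi
      have hndT1 : (q₂ :: rec).Nodup := by
        have hsub : (q₂ :: rec).Sublist (γ ++ q₁ :: q₂ :: rec) := by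
          refine List.Sublist.trans ?_ (List.sublist_append_right γ _)
          exact (List.sublist_cons_of_sublist q₁ (List.Sublist.refl _))
        exact hsub.nodup houtnd
      -- non-crossing of q₁ :: q₂ :: rec
      have hT0 : NoncrossingList (q₁ :: q₂ :: rec) := by
        apply ncl_cons q₁ q₂ rec hT1 hndT1
        intro i hi
        apply H2_master (A := fun p => -(f p)) (G := fun p => g p) (isAff_neg f)
          (isAff_affine g) q₁ q₂ rec (by simp [hq₁]) (by simp [hq₂])
        intro i' hi' z hz hzA
        have hres := segsafeA (A := fun p => -(f p)) (G := fun p => g p) (isAff_neg f)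
          (isAff_affine g) q₂ (g q₂) (by simp [hq₂]) rfl
          (fun z z' h1 h2 h3 => hsep z z' (by simp at h1 h2; rw [h1, h2]) h3)
          _ _ ?_ ?_ ?_ ?_ z hz hzA
        · rcases hres with h | h
          · left; exact h
          · right; right
            rw [max_eq_right hg12.le]; exact h
        · simp only [neg_nonpos]
          rcases List.mem_cons.mp (List.get_mem (q₂ :: rec) _) with h | h
          · rw [h, hq₂]
          · exact hrecf _ h
        · simp only [neg_nonpos]
          rcases List.mem_cons.mp (List.get_mem (q₂ :: rec) _) with h | h
          · rw [h, hq₂]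
          · exact hrecf _ h
        · intro h0
          simp only [neg_eq_zero] at h0
          rcases List.mem_cons.mp (List.get_mem (q₂ :: rec) _) with h | h
          · left; exact h
          · right; exact hQg2 _ (hrecline _ h h0)
        · intro h0
          simp only [neg_eq_zero] at h0
          rcases List.mem_cons.mp (List.get_mem (q₂ :: rec) _) with h | h
          · left; exact h
          · right; exact hQg2 _ (hrecline _ h h0)
      -- the full list
      have hfull : NoncrossingList (γ ++ q₁ :: q₂ :: rec) := by
        apply group_dive f g hsep q₁ γ (q₂ :: rec) hq₁ hγf hγs ?_ ?_ ?_ ?_ houtnd hT0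
        · intro p hp
          rcases List.mem_cons.mp hp with rfl | hp'
          · exact le_of_eq hq₂.symm
          · exact hrecf p hp'
        · intro p hp h0
          rcases List.mem_cons.mp hp with rfl | hp'
          · exact hg12
          · exact hQg1 _ (hrecline p hp' h0)
        · intro p hp
          simp only [List.head?_cons, Option.mem_some_iff] at hp
          rw [← hp]; exact hq₂
        · intro p hp hfp x hx
          have hpB : p ∈ Bd := by
            rcases List.mem_cons.mp hp with rfl | hp'
            · exact absurd hq₂ hfp.ne'
            · rcases hrecmem p hp' with h | h
              · exact absurd (hQf' p h) hfp.ne'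
              · exact h
          exact hsel x (hγperm.mem_iff.mp hx) p hpB
      refine ⟨hrun ▸ hfull, hrun ▸ houtperm, ?_⟩
      -- HeadP
      rw [hrun]
      intro h t heq
      rcases hγc : γ with _ | ⟨c, γr⟩
      · rw [hγc] at heq
        simp only [List.nil_append] at heq
        left
        exact ⟨by simp, by simp [(List.cons_eq_cons.mp heq).1]⟩
      · rw [hγc, List.cons_append] at heq
        have hhc : h = c := (List.cons_eq_cons.mp heq).1.symm
        subst hhc
        right
        have hhtake : h ∈ s.take a := hγperm.mem_iff.mp (by rw [hγc]; simp)
        have hhB : h ∈ B := hsperm.mem_iff.mp (List.take_subset a s hhtake)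
        refine ⟨hhB, hBf h hhB, ?_, by simp⟩
        intro b hb
        have hbs : b ∈ s := hsperm.mem_iff.mpr hb
        have : b ∈ s.take a ∨ b ∈ Bd := by
          rw [hBd_def]
          rw [← List.take_append_drop a s] at hbs
          exact List.mem_append.mp hbs
        simp only [List.headD_cons]
        rcases this with hb' | hb'
        · rcases head_min hγs hγc b (hγperm.mem_iff.mpr hb') with rfl | hlt
          · exact le_refl _
          · rcases hlt with h' | ⟨h', _⟩
            · exact h'.le
            · exact h'.le
        · rcases hsel h hhtake b hb' with h' | ⟨h', _⟩
          · exact h'.le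
          · exact h'.le


omit hsep in
theorem run_inj : ∀ (n : ℕ) (QL : List Pt), QL.length ≤ n →
    ∀ (o : Pt) (B : List Pt) (w w₂ : List ℕ),
    (∀ q ∈ QL, f q = 0) → (∀ b ∈ B, 0 < f b) →
    w.length = QL.length / 2 + 1 → w₂.length = QL.length / 2 + 1 →
    w.sum = B.length → w₂.sum = B.length →
    run f g o QL B w = run f g o QL B w₂ → w = w₂ := by
  have base : ∀ (w w₂ : List ℕ) (m : ℕ), w.length = 1 → w₂.length = 1 →
      w.sum = m → w₂.sum = m → w = w₂ := by
    intro w w₂ m h1 h2 h3 h4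
    rcases w with _ | ⟨x, _ | _⟩
    · simp at h1
    · rcases w₂ with _ | ⟨y, _ | _⟩
      · simp at h2
      · simp only [List.sum_cons, List.sum_nil, add_zero] at h3 h4
        have : x = y := by omega
        rw [this]
      · simp at h2
    · simp at h1
  intro n
  induction n with
  | zero =>
    intro QL hlen o B w w₂ hQf hBf hl1 hl2 hs1 hs2 _
    have : QL = [] := List.length_eq_zero_iff.mp (by omega)
    subst this
    exact base w w₂ B.length (by simp only [List.length_nil] at hl1; omega)
      (by simp only [List.length_nil] at hl2; omega) hs1 hs2
  | succ n ihn =>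
    intro QL hlen o B w w₂ hQf hBf hl1 hl2 hs1 hs2 heq
    rcases QL with _ | ⟨q₁, _ | ⟨q₂, Q⟩⟩
    · exact base w w₂ B.length (by simp only [List.length_nil] at hl1; omega)
        (by simp only [List.length_nil] at hl2; omega) hs1 hs2
    · exact base w w₂ B.length
        (by simp only [List.length_cons, List.length_nil] at hl1; omega)
        (by simp only [List.length_cons, List.length_nil] at hl2; omega) hs1 hs2
    · rcases w with _ | ⟨a, w'⟩
      · simp at hl1
      rcases w₂ with _ | ⟨a₂, w₂'⟩
      · simp at hl2
      have hq₁ : f q₁ = 0 := hQf q₁ (by simp)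
      have hsperm : (B.mergeSort (selLe f g q₁)).Perm B := List.mergeSort_perm B _
      have hslen : (B.mergeSort (selLe f g q₁)).length = B.length := hsperm.length_eq
      have hsf : ∀ b ∈ B.mergeSort (selLe f g q₁), 0 < f b :=
        fun b hb => hBf b (hsperm.mem_iff.mp hb)
      have ham : a ≤ B.length := by
        have : a ≤ (a :: w').sum := by simp
        omega
      have ha₂m : a₂ ≤ B.length := by
        have : a₂ ≤ (a₂ :: w₂').sum := by simp
        omega
      have hγlen : ∀ c : ℕ, c ≤ B.length →
          (((B.mergeSort (selLe f g q₁)).take c).mergeSort (visLe f g q₁)).length = c := by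
        intro c hc
        rw [(List.mergeSort_perm _ _).length_eq, List.length_take, hslen]
        omega
      -- a key fact: position c in the run output
      have hkey : ∀ (c : ℕ) (v : List ℕ), c ≤ B.length →
          (run f g o (q₁ :: q₂ :: Q) B (c :: v))[c]? = some q₁ := by
        intro c v hc
        rw [run_cons]
        simp only [List.headD_cons, List.tail_cons]
        rw [List.getElem?_append_right (by rw [hγlen c hc])]
        rw [hγlen c hc]
        simp
      rcases lt_trichotomy a a₂ with hlt | heqa | hlt
      · exfalso
        have h1 := hkey a w' ham
        have h2 : (run f g o (q₁ :: q₂ :: Q) B (a₂ :: w₂'))[a]? =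
            some ((((B.mergeSort (selLe f g q₁)).take a₂).mergeSort (visLe f g q₁))[a]'
              (by rw [hγlen a₂ ha₂m]; omega)) := by
          rw [run_cons]
          simp only [List.headD_cons, List.tail_cons]
          rw [List.getElem?_append_left (by rw [hγlen a₂ ha₂m]; omega)]
          exact List.getElem?_eq_getElem _
        rw [heq, h2] at h1
        have hmem : (((B.mergeSort (selLe f g q₁)).take a₂).mergeSort (visLe f g q₁))[a]'
            (by rw [hγlen a₂ ha₂m]; omega) ∈
            ((B.mergeSort (selLe f g q₁)).take a₂).mergeSort (visLe f g q₁) :=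
          List.getElem_mem _
        have hmem' := (List.mergeSort_perm _ _).mem_iff.mp hmem
        have hfb : 0 < f ((((B.mergeSort (selLe f g q₁)).take a₂).mergeSort (visLe f g q₁))[a]'
            (by rw [hγlen a₂ ha₂m]; omega)) :=
          hsf _ (List.take_subset _ _ hmem')
        have hqq := Option.some_injective _ h1
        rw [hqq] at hfb
        exact hfb.ne' hq₁
      · subst heqa
        -- equal group sizes: cancel and recurse
        rw [run_cons, run_cons] at heq
        simp only [List.headD_cons, List.tail_cons] at heq
        have hcancel := List.append_inj heq rfl
        have hrec : run f g q₂ Q ((B.mergeSort (selLe f g q₁)).drop a) w' =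
            run f g q₂ Q ((B.mergeSort (selLe f g q₁)).drop a) w₂' := by
          simpa using hcancel.2
        have := ihn Q (by simp at hlen; omega) q₂ ((B.mergeSort (selLe f g q₁)).drop a)
          w' w₂' (fun q hq => hQf q (by simp [hq]))
          (fun b hb => hsf b (List.drop_subset _ _ hb))
          (by simp at hl1 ⊢; omega) (by simp at hl2 ⊢; omega)
          (by rw [List.length_drop, hslen]; simp at hs1; omega)
          (by rw [List.length_drop, hslen]; simp at hs2; omega) hrec
        rw [this]
      · exfalso
        have h1 := hkey a₂ w₂' ha₂m
        have h2 : (run f g o (q₁ :: q₂ :: Q) B (a :: w'))[a₂]? =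
            some ((((B.mergeSort (selLe f g q₁)).take a).mergeSort (visLe f g q₁))[a₂]'
              (by rw [hγlen a ham]; omega)) := by
          rw [run_cons]
          simp only [List.headD_cons, List.tail_cons]
          rw [List.getElem?_append_left (by rw [hγlen a ham]; omega)]
          exact List.getElem?_eq_getElem _
        rw [← heq, h2] at h1
        have hmem : (((B.mergeSort (selLe f g q₁)).take a).mergeSort (visLe f g q₁))[a₂]'
            (by rw [hγlen a ham]; omega) ∈
            ((B.mergeSort (selLe f g q₁)).take a).mergeSort (visLe f g q₁) :=
          List.getElem_mem _
        have hmem' := (List.mergeSort_perm _ _).mem_iff.mp hmem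
        have hfb : 0 < f ((((B.mergeSort (selLe f g q₁)).take a).mergeSort (visLe f g q₁))[a₂]'
            (by rw [hγlen a ham]; omega)) :=
          hsf _ (List.take_subset _ _ hmem')
        have hqq := Option.some_injective _ h1
        rw [hqq] at hfb
        exact hfb.ne' hq₁

end RunMain


section Adjacency

/-- `x` is immediately followed by `y` in `l`. -/
def Adj (l : List Pt) (x y : Pt) : Prop :=
  ∃ i : ℕ, ∃ h : i + 1 < l.length, l[i] = x ∧ l[i + 1] = y

theorem adj_reverse {l : List Pt} {x y : Pt} (h : Adj l x y) : Adj l.reverse y x := by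
  obtain ⟨i, hi, h1, h2⟩ := h
  refine ⟨l.length - i - 2, by simp; omega, ?_, ?_⟩
  · rw [List.getElem_reverse]
    have : l.length - 1 - (l.length - i - 2) = i + 1 := by omega
    simp only [this]
    exact h2
  · rw [List.getElem_reverse]
    have : l.length - 1 - (l.length - i - 2 + 1) = i := by omega
    simp only [this]
    exact h1

theorem adj_asymm {l : List Pt} {x y : Pt} (hnd : l.Nodup) (h1 : Adj l x y)
    (h2 : Adj l y x) (hxy : x ≠ y) : False := by
  obtain ⟨i, hi, hi1, hi2⟩ := h1
  obtain ⟨j, hj, hj1, hj2⟩ := h2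
  have e1 : l[j] = l[i + 1] := by rw [hj1, hi2]
  have e2 : l[j + 1] = l[i] := by rw [hj2, hi1]
  have hji : j = i + 1 := by
    have := (List.Nodup.getElem_inj_iff hnd).mp e1
    omega
  have hji2 : j + 1 = i := by
    have := (List.Nodup.getElem_inj_iff hnd).mp e2
    omega
  omega

variable (f g : Pt →ᵃ[ℝ] ℝ)

theorem adj_run (o q₁ q₂ : Pt) (Q : List Pt) (B : List Pt) (w : List ℕ) :
    Adj (run f g o (q₁ :: q₂ :: Q) B w) q₁ q₂ := by
  rw [run_cons]
  set γ := ((B.mergeSort (selLe f g q₁)).take (w.headD 0)).mergeSort (visLe f g q₁) with hγ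
  refine ⟨γ.length, by simp, ?_, ?_⟩
  · rw [List.getElem_append_right (le_refl _)]
    simp
  · rw [List.getElem_append_right (by omega)]
    have : γ.length + 1 - γ.length = 1 := by omega
    simp [this]

end Adjacency

end NCH15

open NCH15 in
/-- If `S` has `n` points, `ℓ ≥ 2` of which lie on the line `{f = 0}` (for a
nonconstant affine functional `f`) while all remaining points lie strictly on
one side of this line, then `S` has at least `C(n - ⌈ℓ/2⌉, ⌊ℓ/2⌋)` non-crossing
Hamiltonian paths. -/
theorem stmt15 (S : Finset Pt) (n ℓ : ℕ) (hcard : S.card = n) (hℓ : 2 ≤ ℓ)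
    (f : Pt →ᵃ[ℝ] ℝ) (hf : f.linear ≠ 0)
    (hon : {x ∈ (↑S : Set Pt) | f x = 0}.ncard = ℓ)
    (hside : ∀ x ∈ S, f x = 0 ∨ 0 < f x) :
    Nat.choose (n - (ℓ + 1) / 2) (ℓ / 2) ≤ hamCount S := by
  classical
  obtain ⟨g, hsep⟩ := exists_g f hf
  set Lset := S.filter (fun x => f x = 0) with hLdef
  set Bset := S.filter (fun x => ¬ f x = 0) with hBdef
  have hLcard : Lset.card = ℓ := by
    have e : {x ∈ (↑S : Set Pt) | f x = 0} = (↑Lset : Set Pt) := by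
      ext x; simp [hLdef]
    rw [← hon, e, Set.ncard_coe_finset]
  have hsplit : Lset.card + Bset.card = n := by
    rw [← hcard, hLdef, hBdef]
    exact Finset.card_filter_add_card_filter_not (p := fun x => f x = 0)
  set m := Bset.card with hmdef
  set h := ℓ / 2 with hhdef
  have hℓn : ℓ ≤ n := by omega
  set B := Bset.toList with hBLdef
  have hBlen : B.length = m := Finset.length_toList _
  have hBnd : B.Nodup := Finset.nodup_toList _
  have hBf : ∀ b ∈ B, 0 < f b := by
    intro b hb
    rw [hBLdef, Finset.mem_toList, hBdef, Finset.mem_filter] at hb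
    rcases hside b hb.1 with h0 | h0
    · exact absurd h0 hb.2
    · exact h0
  set QL := Lset.toList.mergeSort (fun x y => decide (g x ≤ g y)) with hQLdef
  have hQLperm : QL.Perm Lset.toList := List.mergeSort_perm _ _
  have hQLlen : QL.length = ℓ := by
    rw [hQLperm.length_eq, Finset.length_toList, hLcard]
  have hQmem : ∀ q ∈ QL, q ∈ Lset := by
    intro q hq
    rw [← Finset.mem_toList]
    exact hQLperm.mem_iff.mp hq
  have hQf : ∀ q ∈ QL, f q = 0 := by
    intro q hq
    have := hQmem q hq
    rw [hLdef, Finset.mem_filter] at this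
    exact this.2
  have hQnd : QL.Nodup := hQLperm.nodup_iff.mpr (Finset.nodup_toList _)
  have hQg : QL.Pairwise (fun p p' => g p < g p') := by
    have hs := List.pairwise_mergeSort (le := fun x y => decide (g x ≤ g y))
      (fun a b c hab hbc => by
        simp only [decide_eq_true_eq] at *; linarith)
      (fun a b => by
        simp only [Bool.or_eq_true, decide_eq_true_eq]; exact le_total _ _)
      Lset.toList
    have := hs.and hQnd
    refine this.imp_of_mem ?_
    intro a b ha hb ⟨h1, h2⟩
    simp only [decide_eq_true_eq] at h1
    rcases eq_or_lt_of_le h1 with he | he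
    · exact absurd (hsep a b (by rw [hQf a ha, hQf b hb]) he) h2
    · exact he
  have hnd : (QL ++ B).Nodup := by
    rw [List.nodup_append]
    refine ⟨hQnd, hBnd, ?_⟩
    intro q hq b hqB hqb
    subst hqb
    have h1 := hQf q hq
    have h2 := hBf q hqB
    exact h2.ne' h1
  -- the word of a multiset
  let wrd : Sym (Fin (h + 1)) m → List ℕ :=
    fun σ => List.ofFn (fun i => Multiset.count i (σ : Multiset (Fin (h + 1))))
  have hwrdlen : ∀ σ, (wrd σ).length = h + 1 := by
    intro σ; simp [wrd]
  have hwrdsum : ∀ σ, (wrd σ).sum = m := by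
    intro σ
    show (List.ofFn fun i => Multiset.count i (σ : Multiset (Fin (h + 1)))).sum = m
    rw [List.sum_ofFn]
    have e := Finset.sum_subset (Finset.subset_univ ((σ : Multiset (Fin (h + 1))).toFinset))
      (f := fun i => Multiset.count i (σ : Multiset (Fin (h + 1))))
      (by intro x _ hx
          exact Multiset.count_eq_zero.mpr (by simpa using hx))
    rw [← e, Multiset.toFinset_sum_count_eq]
    exact σ.2
  have hwrdinj : Function.Injective wrd := by
    intro σ τ hw
    simp only [wrd] at hw
    have := List.ofFn_inj.mp hw
    apply Subtype.ext
    apply Multiset.ext.mpr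
    intro i
    exact congrFun this i
  -- the path of a word
  let path : Sym (Fin (h + 1)) m → List Pt := fun σ => run f g 0 QL B (wrd σ)
  have hmain : ∀ σ, NoncrossingList (path σ) ∧ (path σ).Perm (QL ++ B) := by
    intro σ
    obtain ⟨h1, h2, _⟩ := run_main f g hsep QL.length QL le_rfl 0 B (wrd σ) hQf hQg hBf hnd
    exact ⟨h1, h2⟩
  have hpmem : ∀ σ, ∀ x : Pt, x ∈ path σ ↔ x ∈ S := by
    intro σ x
    rw [(hmain σ).2.mem_iff, List.mem_append]
    constructor
    · rintro (hx | hx)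
      · exact Finset.mem_of_mem_filter x (hQmem x hx)
      · rw [hBLdef, Finset.mem_toList, hBdef] at hx
        exact Finset.mem_of_mem_filter x hx
    · intro hx
      rcases hside x hx with h0 | h0
      · left
        apply hQLperm.mem_iff.mpr
        rw [Finset.mem_toList, hLdef, Finset.mem_filter]
        exact ⟨hx, h0⟩
      · right
        rw [hBLdef, Finset.mem_toList, hBdef, Finset.mem_filter]
        exact ⟨hx, h0.ne'⟩
  have hpnodup : ∀ σ, (path σ).Nodup := fun σ => (hmain σ).2.nodup_iff.mpr hnd
  have hham : ∀ σ, IsNCHamList S (path σ) :=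
    fun σ => ⟨hpnodup σ, hpmem σ, (hmain σ).1⟩
  -- injectivity of words → paths
  have hwlen : ∀ σ, (wrd σ).length = QL.length / 2 + 1 := by
    intro σ; rw [hwrdlen, hQLlen]
  have hpathinj : ∀ σ τ, path σ = path τ → σ = τ := by
    intro σ τ hp
    apply hwrdinj
    exact run_inj f g QL.length QL le_rfl 0 B (wrd σ) (wrd τ) hQf hBf
      (hwlen σ) (hwlen τ) (by rw [hwrdsum, hBlen]) (by rw [hwrdsum, hBlen]) hp
  -- QL starts with two points
  obtain ⟨q₁, q₂, Q, hQLshape⟩ : ∃ q₁ q₂ Q, QL = q₁ :: q₂ :: Q := by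
    rcases QL with _ | ⟨q₁, _ | ⟨q₂, Q⟩⟩
    · exfalso; rw [← hQLlen] at hℓ; simp at hℓ
    · exfalso; rw [← hQLlen] at hℓ; simp at hℓ
    · exact ⟨q₁, q₂, Q, rfl⟩
  have hadj : ∀ σ, Adj (path σ) q₁ q₂ := by
    intro σ
    simp only [path, hQLshape]
    exact adj_run f g 0 q₁ q₂ Q B (wrd σ)
  have hnorev : ∀ σ τ, path σ = (path τ).reverse → False := by
    intro σ τ hp
    have h1 := hadj σ
    have h2 : Adj (path σ) q₂ q₁ := by
      rw [hp]
      exact adj_reverse (hadj τ)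
    exact adj_asymm (hpnodup σ) h1 h2 (fun hq => by
      have := List.nodup_cons.mp (hQLshape ▸ hQnd)
      exact this.1 (hq ▸ (List.mem_cons_self (a := q₂) (l := Q))))
  -- the family of path pairs
  let F : Sym (Fin (h + 1)) m → Set (List Pt) := fun σ => {path σ, (path σ).reverse}
  have hFinj : Function.Injective F := by
    intro σ τ hF
    have hmem : path σ ∈ F σ := Set.mem_insert _ _
    rw [hF] at hmem
    simp only [F, Set.mem_insert_iff, Set.mem_singleton_iff] at hmem
    rcases hmem with hc | hc
    · exact hpathinj _ _ hc
    · exact absurd hc (fun hc => hnorev σ τ hc)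
  set hamSet : Set (Set (List Pt)) :=
    {P : Set (List Pt) | ∃ l : List Pt, IsNCHamList S l ∧ P = {l, l.reverse}} with hamdef
  have hFmem : ∀ σ, F σ ∈ hamSet := by
    intro σ
    exact ⟨path σ, hham σ, rfl⟩
  have hfin : hamSet.Finite := by
    have hsub : hamSet ⊆ (fun l => ({l, l.reverse} : Set (List Pt))) ''
        {l : List Pt | l ∈ (QL ++ B).permutations} := by
      rintro P ⟨l, ⟨hlnd, hlmem, _⟩, rfl⟩
      refine ⟨l, ?_, rfl⟩
      rw [Set.mem_setOf_eq, List.mem_permutations]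
      apply List.perm_of_nodup_nodup_toFinset_eq hlnd hnd
      ext x
      simp only [List.mem_toFinset]
      rw [hlmem x, List.mem_append]
      constructor
      · intro hx
        rcases hside x hx with h0 | h0
        · left
          apply hQLperm.mem_iff.mpr
          rw [Finset.mem_toList, hLdef, Finset.mem_filter]
          exact ⟨hx, h0⟩
        · right
          rw [hBLdef, Finset.mem_toList, hBdef, Finset.mem_filter]
          exact ⟨hx, h0.ne'⟩
      · rintro (hx | hx)
        · exact Finset.mem_of_mem_filter x (hQmem x hx)
        · rw [hBLdef, Finset.mem_toList, hBdef] at hx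
          exact Finset.mem_of_mem_filter x hx
    apply Set.Finite.subset ?_ hsub
    apply Set.Finite.image
    exact (List.permutations (QL ++ B)).finite_toSet.subset (fun l hl => hl)
  -- counting
  have hcount : Nat.choose (m + h) h ≤ hamCount S := by
    have h1 : (Set.range F).ncard = Fintype.card (Sym (Fin (h + 1)) m) := by
      rw [← Set.image_univ, Set.ncard_image_of_injective _ hFinj, Set.ncard_univ,
        Nat.card_eq_fintype_card]
    have h2 : (Set.range F) ⊆ hamSet := by
      rintro P ⟨σ, rfl⟩
      exact hFmem σ
    have h3 : (Set.range F).ncard ≤ hamSet.ncard := Set.ncard_le_ncard h2 hfin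
    have h4 : Fintype.card (Sym (Fin (h + 1)) m) = Nat.choose (m + h) h := by
      rw [Sym.card_sym_eq_multichoose, Nat.multichoose_eq, Fintype.card_fin]
      have e1 : h + 1 + m - 1 = h + m := by omega
      rw [e1]
      have e2 : m = h + m - h := by omega
      rw [show (h + m).choose m = (h + m).choose (h + m - h) by rw [← e2]]
      rw [Nat.choose_symm (by omega)]
      rw [Nat.add_comm h m]
    rw [hamCount, ← hamdef]
    omega
  have hfinal : n - (ℓ + 1) / 2 = m + h := by omega
  rw [hfinal]
  exact hcount
end

section
/- In any surrounding cycle C of a finite planar point set S, every vertex of the convex hull of S is a vertex of C, and every edge of C whose two endpoints are both convex hull vertices of S must be an edge of the convex hull of S. -/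
/-- The `i`-th edge of the closed polygonal curve with vertices `v` (indices
taken cyclically). -/
def polyEdge {m : ℕ} (v : Fin (m + 3) → Pt) (i : Fin (m + 3)) : Set Pt :=
  segment ℝ (v i) (v (i + 1))

/-- `v` lists the vertices, in cyclic order, of a simple polygon: the vertices
are distinct, consecutive edges meet exactly in their common vertex, and
non-adjacent edges are disjoint. -/
def IsSimplePolygon {m : ℕ} (v : Fin (m + 3) → Pt) : Prop :=
  Function.Injective v ∧
  (∀ i : Fin (m + 3), polyEdge v i ∩ polyEdge v (i + 1) = {v (i + 1)}) ∧
  (∀ i j : Fin (m + 3), j ≠ i → j ≠ i + 1 → i ≠ j + 1 →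
    polyEdge v i ∩ polyEdge v j = ∅)

/-- The boundary of the polygon with vertex list `v`. -/
def polygonBoundary {m : ℕ} (v : Fin (m + 3) → Pt) : Set Pt :=
  ⋃ i, polyEdge v i

/-- The interior region of a closed curve `B`: points off `B` whose connected
component in the complement of `B` is bounded. -/
def polygonInterior (B : Set Pt) : Set Pt :=
  {x | x ∉ B ∧ Bornology.IsBounded (connectedComponentIn Bᶜ x)}

/-- The number of polygonalizations of `S`: simple polygons whose vertex set is
exactly `S`, identified by their boundaries. -/
noncomputable def polyCount (S : Finset Pt) : ℕ :=
  {B : Set Pt | ∃ (m : ℕ) (v : Fin (m + 3) → Pt),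
    IsSimplePolygon v ∧ Set.range v = (↑S : Set Pt) ∧ B = polygonBoundary v}.ncard

/-! ### Auxiliary lemmas -/

open Set Bornology
open Fin.NatCast

lemma Pt.ext2 {a b : Pt} (h0 : a 0 = b 0) (h1 : a 1 = b 1) : a = b := by
  apply PiLp.ext; intro j; fin_cases j <;> assumption

lemma Pt.apply_add (p q : Pt) (j : Fin 2) : (p + q) j = p j + q j := rfl
lemma Pt.apply_smul (t : ℝ) (p : Pt) (j : Fin 2) : (t • p) j = t * p j := rfl
lemma Pt.apply_sub (p q : Pt) (j : Fin 2) : (p - q) j = p j - q j := rfl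

/-- The signed side of the line through `a`, `b` on which `y` lies. -/
noncomputable def sg (a b y : Pt) : ℝ :=
  (b 0 - a 0) * (y 1 - a 1) - (b 1 - a 1) * (y 0 - a 0)

lemma sg_comb (a b p q : Pt) {s t : ℝ} (hst : s + t = 1) :
    sg a b (s • p + t • q) = s * sg a b p + t * sg a b q := by
  have hs : s = 1 - t := by linarith
  subst hs
  simp only [sg, Pt.apply_add, Pt.apply_smul]; ring

lemma sg_self_left (a b : Pt) : sg a b a = 0 := by simp [sg]
lemma sg_self_right (a b : Pt) : sg a b b = 0 := by simp [sg]; ring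
lemma sg_swap (a b y : Pt) : sg b a y = - sg a b y := by simp only [sg]; ring

lemma convex_sg_le (a b : Pt) : Convex ℝ {y : Pt | sg a b y ≤ 0} := by
  intro p hp q hq s t hs ht hst
  have h := sg_comb a b p q hst
  simp only [mem_setOf_eq] at *
  rw [h]
  nlinarith [mul_le_mul_of_nonneg_left hp hs, mul_le_mul_of_nonneg_left hq ht]

lemma hull_sg_le {T : Set Pt} (a b : Pt) (h : ∀ y ∈ T, sg a b y ≤ 0) :
    convexHull ℝ T ⊆ {y : Pt | sg a b y ≤ 0} :=
  convexHull_min h (convex_sg_le a b)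

lemma sg_eq_zero_param {a b c : Pt} (hab : a ≠ b) (h : sg a b c = 0) :
    ∃ t : ℝ, c = a + t • (b - a) := by
  have hcoord : b 0 - a 0 ≠ 0 ∨ b 1 - a 1 ≠ 0 := by
    by_contra hc
    push_neg at hc
    exact hab (Pt.ext2 (by have := hc.1; linarith) (by have := hc.2; linarith))
  simp only [sg] at h
  rcases hcoord with h0 | h1
  · refine ⟨(c 0 - a 0) / (b 0 - a 0), Pt.ext2 ?_ ?_⟩
    · simp only [Pt.apply_add, Pt.apply_smul, Pt.apply_sub]; field_simp; ring
    · simp only [Pt.apply_add, Pt.apply_smul, Pt.apply_sub]; field_simp; nlinarith [h]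
  · refine ⟨(c 1 - a 1) / (b 1 - a 1), Pt.ext2 ?_ ?_⟩
    · simp only [Pt.apply_add, Pt.apply_smul, Pt.apply_sub]; field_simp; nlinarith [h]
    · simp only [Pt.apply_add, Pt.apply_smul, Pt.apply_sub]; field_simp; ring

/-- An element of `S` not in the hull of the rest is an extreme point of the hull. -/
lemma extreme_pt {S : Set Pt} {a : Pt} (haS : a ∈ S)
    (ha : a ∉ convexHull ℝ (S \ {a})) :
    ∀ c ∈ convexHull ℝ S, ∀ d ∈ convexHull ℝ S, a ∈ openSegment ℝ c d → c = a ∧ d = a := by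
  intro c hc d hd hacd
  rcases eq_empty_or_nonempty (S \ {a}) with hT | hT
  · have hSa : S = {a} := by
      apply Subset.antisymm _ (singleton_subset_iff.2 haS)
      intro y hy
      by_contra hya
      exact (eq_empty_iff_forall_notMem.1 hT y) ⟨hy, hya⟩
    rw [hSa, convexHull_singleton] at hc hd
    exact ⟨hc, hd⟩
  · have hins : insert a (S \ {a}) = S := by
      ext y; by_cases hy : y = a <;> simp [hy, haS]
    have hhull := convexHull_insert (𝕜 := ℝ) (x := a) hT
    rw [hins] at hhull
    rw [hhull, mem_convexJoin] at hc hd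
    obtain ⟨x₁, hx₁, z₁, hz₁, hcseg⟩ := hc
    obtain ⟨x₂, hx₂, z₂, hz₂, hdseg⟩ := hd
    rw [mem_singleton_iff] at hx₁ hx₂
    rw [hx₁] at hcseg; rw [hx₂] at hdseg
    obtain ⟨α, β, hα, hβ, hαβ, hcval⟩ := hcseg
    obtain ⟨γ, δ, hγ, hδ, hγδ, hdval⟩ := hdseg
    obtain ⟨t, s, ht, hs, hts, haval⟩ := hacd
    set B : ℝ := t * β + s * δ with hB
    have hBnn : 0 ≤ B := by positivity
    have h2 : ((t*β) • z₁ + (s*δ) • z₂) + (t*α + s*γ) • a = a := by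
      conv_rhs => rw [← haval]
      rw [← hcval, ← hdval]
      module
    rcases eq_or_lt_of_le hBnn with hB0 | hBpos
    · have hβ0 : β = 0 := by nlinarith
      have hδ0 : δ = 0 := by nlinarith
      have hα1 : α = 1 := by linarith
      have hγ1 : γ = 1 := by linarith
      constructor
      · rw [← hcval, hβ0, hα1]; simp
      · rw [← hdval, hδ0, hγ1]; simp
    · exfalso
      apply ha
      have h4 : t*α + s*γ = 1 - B := by
        linear_combination t*hαβ + s*hγδ + hts + hB
      have h2' : ((t*β) • z₁ + (s*δ) • z₂) + (1 - B) • a = a := by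
        rw [← h4]; exact h2
      have h8 : (t*β) • z₁ + (s*δ) • z₂ = a - (1 - B) • a :=
        eq_sub_of_add_eq h2'
      have h1 : (t*β) • z₁ + (s*δ) • z₂ = B • a := by
        rw [h8]; module
      have hBne : B ≠ 0 := ne_of_gt hBpos
      have key : a = (t * β / B) • z₁ + (s * δ / B) • z₂ := by
        calc a = B⁻¹ • (B • a) := by rw [smul_smul, inv_mul_cancel₀ hBne, one_smul]
        _ = B⁻¹ • ((t*β) • z₁ + (s*δ) • z₂) := by rw [h1]
        _ = (t * β / B) • z₁ + (s * δ / B) • z₂ := by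
            rw [smul_add, smul_smul, smul_smul]
            congr 2 <;> field_simp
      have hmem : (t * β / B) • z₁ + (s * δ / B) • z₂ ∈ convexHull ℝ (S \ {a}) := by
        refine (convex_convexHull ℝ _) hz₁ hz₂
          (div_nonneg (mul_nonneg ht.le hβ) hBnn)
          (div_nonneg (mul_nonneg hs.le hδ) hBnn) ?_
        rw [← add_div, div_eq_one_iff_eq hBne]
      rw [← key] at hmem
      exact hmem

/-- The closed region bounded by the polygon lies in the hull of its vertices. -/
lemma surround_subset_hull {m : ℕ} (v : Fin (m + 3) → Pt) :
    polygonBoundary v ∪ polygonInterior (polygonBoundary v)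
      ⊆ convexHull ℝ (Set.range v) := by
  set K := convexHull ℝ (Set.range v) with hK
  have hBK : polygonBoundary v ⊆ K := by
    intro y hy
    obtain ⟨i, hi⟩ := mem_iUnion.1 hy
    have h1 : v i ∈ K := subset_convexHull ℝ _ (mem_range_self i)
    have h2 : v (i + 1) ∈ K := subset_convexHull ℝ _ (mem_range_self (i + 1))
    exact (convex_convexHull ℝ _).segment_subset h1 h2 hi
  rintro x (hx | hx)
  · exact hBK hx
  · by_contra hxK
    have hKclosed : IsClosed K := (finite_range v).isClosed_convexHull (𝕜 := ℝ)
    have hKconv : Convex ℝ K := convex_convexHull ℝ _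
    obtain ⟨f, u, hfx, hfK⟩ := geometric_hahn_banach_point_closed hKconv hKclosed hxK
    have hbK : v 0 ∈ K := subset_convexHull ℝ _ (mem_range_self 0)
    set z : Pt := x - v 0 with hz
    have hfz : f z < 0 := by
      have := hfK _ hbK
      simp only [hz, map_sub]
      linarith
    have hzne : z ≠ 0 := by
      intro h
      rw [h, map_zero] at hfz
      exact lt_irrefl 0 hfz
    set R : Set Pt := (fun t : ℝ => x + t • z) '' (Ici 0) with hR
    have hxR : x ∈ R := ⟨0, self_mem_Ici, by simp⟩
    have hRB : R ⊆ (polygonBoundary v)ᶜ := by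
      rintro y ⟨t, ht, rfl⟩
      intro hyB
      have hyK : x + t • z ∈ K := hBK hyB
      have := hfK _ hyK
      have hcalc : f (x + t • z) = f x + t * f z := by
        rw [map_add, map_smul]; rfl
      nlinarith [mul_nonpos_of_nonneg_of_nonpos ht hfz.le]
    have hRconn : IsPreconnected R := by
      apply (isPreconnected_Ici (a := (0:ℝ))).image
      exact (Continuous.add continuous_const (continuous_id.smul continuous_const)).continuousOn
    have hRsub : R ⊆ connectedComponentIn (polygonBoundary v)ᶜ x :=
      hRconn.subset_connectedComponentIn hxR hRB
    have hRbdd : IsBounded R := hx.2.subset hRsub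
    obtain ⟨C, hC⟩ := (isBounded_iff_forall_norm_le).1 hRbdd
    set t₀ : ℝ := (C + ‖x‖ + 1) / ‖z‖ with ht₀
    have hznorm : 0 < ‖z‖ := norm_pos_iff.2 hzne
    have hC0 : 0 ≤ C := le_trans (norm_nonneg x) (hC x hxR)
    have ht₀nn : 0 ≤ t₀ := div_nonneg (by positivity) hznorm.le
    have hmem : x + t₀ • z ∈ R := ⟨t₀, ht₀nn, rfl⟩
    have hle := hC _ hmem
    have h1 : ‖t₀ • z‖ - ‖x‖ ≤ ‖x + t₀ • z‖ := by
      have := norm_add_le (-(x : Pt)) (x + t₀ • z)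
      simp only [neg_add_cancel_left, norm_neg] at this
      calc ‖t₀ • z‖ - ‖x‖ ≤ ‖x‖ + ‖x + t₀ • z‖ - ‖x‖ := by linarith
      _ = ‖x + t₀ • z‖ := by ring
    have h2 : ‖t₀ • z‖ = t₀ * ‖z‖ := by
      rw [norm_smul, Real.norm_of_nonneg ht₀nn]
    have h3 : t₀ * ‖z‖ = C + ‖x‖ + 1 := by
      rw [ht₀, div_mul_cancel₀ _ (ne_of_gt hznorm)]
    nlinarith

lemma sign_change (w : ℕ → ℝ) : ∀ (d a : ℕ), (∀ t, a ≤ t → t ≤ a + d → w t ≠ 0) →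
    w a * w (a + d) < 0 →
    ∃ t, a ≤ t ∧ t < a + d ∧ w t * w (t + 1) < 0 := by
  intro d
  induction d with
  | zero =>
    intro a _ h
    simp only [Nat.add_zero] at h
    nlinarith [mul_self_nonneg (w a)]
  | succ d ih =>
    intro a hnz h
    have hwa : w a ≠ 0 := hnz a (le_refl a) (by omega)
    have hwa1 : w (a + 1) ≠ 0 := hnz (a + 1) (by omega) (by omega)
    rcases lt_trichotomy (w a * w (a + 1)) 0 with hlt | heq | hgt
    · exact ⟨a, le_refl a, by omega, hlt⟩
    · exfalso
      rcases mul_eq_zero.1 heq with h0 | h0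
      exacts [hwa h0, hwa1 h0]
    · have key : w (a + 1) * w (a + 1 + d) < 0 := by
        have e : a + 1 + d = a + (d + 1) := by omega
        rw [e]
        rcases hwa.lt_or_gt with ha | ha
        · have hw1 : w (a + 1) < 0 := by nlinarith
          have hp : 0 < w (a + (d + 1)) := by nlinarith
          exact mul_neg_of_neg_of_pos hw1 hp
        · have hw1 : 0 < w (a + 1) := by nlinarith
          have hp : w (a + (d + 1)) < 0 := by nlinarith
          exact mul_neg_of_pos_of_neg hw1 hp
      obtain ⟨t, h1, h2, h3⟩ := ih (a + 1)
        (fun t ha hb => hnz t (by omega) (by omega)) key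
      exact ⟨t, by omega, by omega, h3⟩

lemma exists_pos_side {T : Set Pt} {a b x : Pt} (hab : a ≠ b)
    (hx : x ∈ interior (convexHull ℝ T)) (hgx : sg a b x = 0) :
    ∃ s ∈ T, 0 < sg a b s := by
  by_contra hcon
  push_neg at hcon
  have hhalf : convexHull ℝ T ⊆ {y : Pt | sg a b y ≤ 0} :=
    hull_sg_le a b hcon
  obtain ⟨ε, hε, hball⟩ := Metric.isOpen_iff.1 isOpen_interior x hx
  set u : Pt := !₂[-(b 1 - a 1), b 0 - a 0] with hu
  have hu0 : u 0 = -(b 1 - a 1) := rfl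
  have hu1 : u 1 = b 0 - a 0 := rfl
  have hcpos : 0 < (b 0 - a 0)^2 + (b 1 - a 1)^2 := by
    rcases eq_or_lt_of_le (by positivity : (0:ℝ) ≤ (b 0 - a 0)^2 + (b 1 - a 1)^2) with h | h
    · exfalso
      apply hab
      apply Pt.ext2 <;> nlinarith [sq_nonneg (b 0 - a 0), sq_nonneg (b 1 - a 1)]
    · exact h
  have hune : u ≠ 0 := by
    intro h
    have h0 : u 0 = 0 := by rw [h]; rfl
    have h1 : u 1 = 0 := by rw [h]; rfl
    rw [hu0] at h0; rw [hu1] at h1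
    nlinarith
  have hupos : 0 < ‖u‖ := norm_pos_iff.2 hune
  set δ : ℝ := ε / (2 * ‖u‖) with hδ
  have hδpos : 0 < δ := by positivity
  have hymem : x + δ • u ∈ Metric.ball x ε := by
    rw [Metric.mem_ball, dist_self_add_left]
    rw [norm_smul, Real.norm_of_nonneg hδpos.le, hδ]
    rw [div_mul_eq_mul_div, mul_comm]
    rw [div_lt_iff₀ (by positivity)]
    nlinarith
  have hyle : sg a b (x + δ • u) ≤ 0 := hhalf (interior_subset (hball hymem))
  have hcomp : sg a b (x + δ • u) = sg a b x + δ * ((b 0 - a 0)^2 + (b 1 - a 1)^2) := by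
    simp only [sg, Pt.apply_add, Pt.apply_smul, hu0, hu1]; ring
  rw [hcomp, hgx] at hyle
  nlinarith

lemma ivt_seg {a b p q : Pt} (h : sg a b p * sg a b q < 0) :
    ∃ z ∈ segment ℝ p q, sg a b z = 0 := by
  have hne : sg a b p - sg a b q ≠ 0 := by
    intro h0
    have heq : sg a b p = sg a b q := by linarith
    rw [heq] at h
    nlinarith [mul_self_nonneg (sg a b q)]
  set t : ℝ := sg a b p / (sg a b p - sg a b q) with ht
  have hbounds : 0 ≤ t ∧ t ≤ 1 := by
    rcases mul_neg_iff.1 h with ⟨h1, h2⟩ | ⟨h1, h2⟩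
    · constructor
      · apply div_nonneg h1.le; linarith
      · rw [div_le_one (by linarith)]; linarith
    · constructor
      · rw [ht, div_nonneg_iff]
        right
        exact ⟨h1.le, by linarith⟩
      · rw [div_le_iff_of_neg (by linarith)]; linarith
  refine ⟨(1 - t) • p + t • q, ⟨1 - t, t, by linarith [hbounds.2], hbounds.1, by ring, rfl⟩, ?_⟩
  rw [sg_comb a b p q (by ring : (1 - t) + t = 1), ht]
  field_simp
  ring

/-- In any surrounding cycle of a finite planar point set `S` (a simple polygon
with vertices among the points of `S` whose closed region contains all of `S`),
every convex hull vertex of `S` is a vertex of the cycle, and every edge of the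
cycle joining two convex hull vertices of `S` lies on the boundary of the
convex hull. -/
theorem stmt19 (S : Finset Pt) {m : ℕ} (v : Fin (m + 3) → Pt)
    (hv : IsSimplePolygon v) (hsub : Set.range v ⊆ (↑S : Set Pt))
    (hsurround : (↑S : Set Pt) ⊆
      polygonBoundary v ∪ polygonInterior (polygonBoundary v)) :
    (∀ p ∈ S, p ∉ convexHull ℝ ((↑S : Set Pt) \ {p}) → ∃ i, v i = p) ∧
    (∀ i : Fin (m + 3),
      v i ∉ convexHull ℝ ((↑S : Set Pt) \ {v i}) →
      v (i + 1) ∉ convexHull ℝ ((↑S : Set Pt) \ {v (i + 1)}) →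
      segment ℝ (v i) (v (i + 1)) ⊆ frontier (convexHull ℝ (↑S : Set Pt))) := by
  constructor
  · -- every hull vertex is a vertex of the cycle
    intro p hp hext
    by_contra hno
    push_neg at hno
    have hrange : Set.range v ⊆ (↑S : Set Pt) \ {p} := by
      rintro y ⟨i, rfl⟩
      exact ⟨hsub ⟨i, rfl⟩, fun h => hno i h⟩
    have h1 : p ∈ convexHull ℝ (Set.range v) :=
      surround_subset_hull v (hsurround hp)
    exact hext (convexHull_mono hrange h1)
  · -- every edge between hull vertices is a hull edge
    intro i ha hb
    set a := v i with hadef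
    set b := v (i + 1) with hbdef
    have haS : a ∈ (↑S : Set Pt) := hsub (mem_range_self i)
    have hbS : b ∈ (↑S : Set Pt) := hsub (mem_range_self (i + 1))
    have hfin : (↑S : Set Pt).Finite := S.finite_toSet
    have hclosed : IsClosed (convexHull ℝ (↑S : Set Pt)) := hfin.isClosed_convexHull (𝕜 := ℝ)
    have hahull : a ∈ convexHull ℝ (↑S : Set Pt) := subset_convexHull ℝ _ haS
    have hbhull : b ∈ convexHull ℝ (↑S : Set Pt) := subset_convexHull ℝ _ hbS
    intro x hx
    rw [hclosed.frontier_eq, mem_diff]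
    constructor
    · exact (convex_convexHull ℝ _).segment_subset hahull hbhull hx
    · intro hxint
      exfalso
      have hinj := hv.1
      have hne : a ≠ b := by
        intro h
        have hii := hinj h
        have h2 : (1 : Fin (m+3)) = 0 := left_eq_add.1 hii
        have := congrArg Fin.val h2
        simp [Fin.val_one, Fin.val_zero] at this
      have hga : sg a b a = 0 := sg_self_left a b
      have hgb : sg a b b = 0 := sg_self_right a b
      have hgx : sg a b x = 0 := by
        obtain ⟨s, t, hs, ht, hst, hxeq⟩ := hx
        rw [← hxeq, sg_comb a b _ _ hst, hga, hgb]; ring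
      have hEa := extreme_pt haS ha
      have hEb := extreme_pt hbS hb
      -- the hull meets the line through a b only in the segment
      have hlineseg : ∀ c ∈ convexHull ℝ (↑S : Set Pt), sg a b c = 0 →
          c ∈ segment ℝ a b := by
        intro c hc hgc
        obtain ⟨t, rfl⟩ := sg_eq_zero_param hne hgc
        rcases le_or_gt 0 t with h0 | h0
        · rcases le_or_gt t 1 with h1 | h1
          · exact ⟨1 - t, t, by linarith, h0, by ring, by module⟩
          · exfalso
            have hbop : b ∈ openSegment ℝ a (a + t • (b - a)) := by
              have htpos : (0:ℝ) < t := by linarith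
              refine ⟨1 - 1/t, 1/t, ?_, by positivity, by ring, ?_⟩
              · have : 1/t < 1 := by rw [div_lt_one htpos]; linarith
                linarith
              · match_scalars <;> field_simp <;> ring
            obtain ⟨hab2, -⟩ := hEb a hahull _ hc hbop
            exact hne hab2
        · exfalso
          have haop : a ∈ openSegment ℝ (a + t • (b - a)) b := by
            have htd : (0:ℝ) < 1 - t := by linarith
            refine ⟨1/(1-t), -t/(1-t), by positivity, ?_, ?_, ?_⟩
            · apply div_pos (by linarith) htd
            · field_simp; ring
            · match_scalars <;> field_simp <;> ring
          obtain ⟨-, hba2⟩ := hEa _ hc b hbhull haop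
          exact hne hba2.symm
      -- points of S strictly on both sides of the line
      obtain ⟨s₁, hs₁S, hs₁⟩ := exists_pos_side hne hxint hgx
      obtain ⟨s₂, hs₂S, hs₂'⟩ :=
        exists_pos_side hne.symm hxint (by rw [sg_swap, hgx]; ring)
      have hs₂ : sg a b s₂ < 0 := by rw [sg_swap] at hs₂'; linarith
      -- vertices strictly on both sides
      have hsur := surround_subset_hull v
      have hkpos : ∃ k, 0 < sg a b (v k) := by
        by_contra hcon
        push_neg at hcon
        have hrange : ∀ y ∈ Set.range v, sg a b y ≤ 0 := by
          rintro y ⟨k, rfl⟩; exact hcon k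
        have := hull_sg_le a b hrange (hsur (hsurround hs₁S))
        exact absurd hs₁ (not_lt.2 this)
      have hlneg : ∃ l, sg a b (v l) < 0 := by
        by_contra hcon
        push_neg at hcon
        have hrange : ∀ y ∈ Set.range v, sg b a y ≤ 0 := by
          rintro y ⟨k, rfl⟩
          rw [sg_swap]
          linarith [hcon k]
        have := hull_sg_le b a hrange (hsur (hsurround hs₂S))
        rw [mem_setOf_eq, sg_swap] at this
        linarith
      -- intermediate vertices are not on the line
      have hmid : ∀ j : Fin (m+3), j ≠ i → j ≠ i + 1 → sg a b (v j) ≠ 0 := by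
        intro j hji hji1 hg0
        have hvj : v j ∈ segment ℝ a b :=
          hlineseg (v j) (subset_convexHull ℝ _ (hsub (mem_range_self j))) hg0
        by_cases hij1 : i = j + 1
        · have hint := hv.2.1 j
          rw [← hij1] at hint
          have hmem : v j ∈ polyEdge v j ∩ polyEdge v i :=
            ⟨left_mem_segment ℝ (v j) (v (j+1)), hvj⟩
          rw [hint] at hmem
          exact hji (hinj (mem_singleton_iff.1 hmem))
        · have hint := hv.2.2 i j hji hji1 hij1
          have hmem : v j ∈ polyEdge v i ∩ polyEdge v j :=
            ⟨hvj, left_mem_segment ℝ (v j) (v (j+1))⟩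
          rw [hint] at hmem
          exact hmem
      obtain ⟨k, hk⟩ := hkpos
      obtain ⟨l, hl⟩ := hlneg
      -- set up the walk around the cycle starting after i+1
      set w : ℕ → ℝ := fun t => sg a b (v (i + 1 + (t : Fin (m+3)))) with hwdef
      have hwt : ∀ j : Fin (m+3), i + 1 + (((j - (i+1)).val : ℕ) : Fin (m+3)) = j := by
        intro j
        rw [Fin.cast_val_eq_self, add_comm (i+1) (j - (i+1))]
        exact sub_add_cancel j (i+1)
      have hkne1 : k ≠ i + 1 := by
        intro h; rw [h] at hk; rw [← hbdef, hgb] at hk; exact lt_irrefl 0 hk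
      have hkne0 : k ≠ i := by
        intro h; rw [h] at hk; rw [← hadef, hga] at hk; exact lt_irrefl 0 hk
      have hlne1 : l ≠ i + 1 := by
        intro h; rw [h] at hl; rw [← hbdef, hgb] at hl; exact lt_irrefl 0 hl
      have hlne0 : l ≠ i := by
        intro h; rw [h] at hl; rw [← hadef, hga] at hl; exact lt_irrefl 0 hl
      set t₁ : ℕ := (k - (i+1)).val with ht₁def
      set t₂ : ℕ := (l - (i+1)).val with ht₂def
      have hwk : w t₁ = sg a b (v k) := by
        show sg a b (v (i + 1 + ((t₁ : ℕ) : Fin (m+3)))) = sg a b (v k)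
        rw [ht₁def, hwt k]
      have hwl : w t₂ = sg a b (v l) := by
        show sg a b (v (i + 1 + ((t₂ : ℕ) : Fin (m+3)))) = sg a b (v l)
        rw [ht₂def, hwt l]
      have hbound : ∀ (j : Fin (m+3)), j ≠ i → j ≠ i + 1 →
          1 ≤ (j - (i+1)).val ∧ (j - (i+1)).val ≤ m + 1 := by
        intro j hj0 hj1
        constructor
        · rcases Nat.eq_zero_or_pos (j - (i+1)).val with h0 | h0
          · exfalso
            apply hj1
            have hz : j - (i+1) = 0 := Fin.ext (by rw [h0, Fin.val_zero])
            exact sub_eq_zero.1 hz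
          · exact h0
        · by_contra hcon
          have hlt : (j - (i+1)).val < m + 3 := (j - (i+1)).isLt
          have heq : (j - (i+1)).val = m + 2 := by omega
          apply hj0
          have hc1 : (((j - (i+1)).val : ℕ) : Fin (m+3)) + 1 = 0 := by
            rw [heq, ← Nat.cast_add_one]
            exact_mod_cast Fin.natCast_self (m+3)
          have hj := hwt j
          rw [← hj, add_assoc, add_comm (1 : Fin (m+3)), hc1, add_zero]
      have hb₁ := hbound k hkne0 hkne1
      have hb₂ := hbound l hlne0 hlne1
      rw [← ht₁def] at hb₁
      rw [← ht₂def] at hb₂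
      set A : ℕ := min t₁ t₂ with hA
      set D : ℕ := max t₁ t₂ - A with hD
      have hnzrange : ∀ t, A ≤ t → t ≤ A + D → w t ≠ 0 := by
        intro t hta htb
        have hrange : 1 ≤ t ∧ t ≤ m + 1 := by omega
        have hvt : ((t : ℕ) : Fin (m+3)).val = t := Fin.val_cast_of_lt (by omega)
        have hne1 : i + 1 + ((t : ℕ) : Fin (m+3)) ≠ i + 1 := by
          intro h
          have h0 := add_eq_left.1 h
          have hv0 := congrArg Fin.val h0
          rw [hvt, Fin.val_zero] at hv0
          omega
        have hne0 : i + 1 + ((t : ℕ) : Fin (m+3)) ≠ i := by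
          intro h
          have h2 : i + ((1 : Fin (m+3)) + ((t : ℕ) : Fin (m+3))) = i + 0 := by
            rw [← add_assoc, h, add_zero]
          have h3 := add_left_cancel h2
          have h4 : (((1 + t : ℕ)) : Fin (m+3)) = 0 := by push_cast; rw [h3]
          have h5 := congrArg Fin.val h4
          rw [Fin.val_cast_of_lt (by omega : 1 + t < m + 3), Fin.val_zero] at h5
          omega
        exact hmid _ hne0 hne1
      have hprod : w A * w (A + D) < 0 := by
        have e : A + D = max t₁ t₂ := by omega
        rcases le_total t₁ t₂ with hle | hle
        · have e1 : A = t₁ := by omega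
          have e2 : A + D = t₂ := by omega
          rw [e2, e1, hwk, hwl]
          exact mul_neg_of_pos_of_neg hk hl
        · have e1 : A = t₂ := by omega
          have e2 : A + D = t₁ := by omega
          rw [e2, e1, hwl, hwk]
          exact mul_neg_of_neg_of_pos hl hk
      obtain ⟨t, htA, htD, hsign⟩ := sign_change w D A hnzrange hprod
      set j : Fin (m+3) := i + 1 + ((t : ℕ) : Fin (m+3)) with hjdef
      have hwtj : w t = sg a b (v j) := rfl
      have hwt1 : w (t + 1) = sg a b (v (j + 1)) := by
        show sg a b (v (i + 1 + (((t+1 : ℕ)) : Fin (m+3)))) = sg a b (v (j + 1))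
        have : (((t+1 : ℕ)) : Fin (m+3)) = ((t : ℕ) : Fin (m+3)) + 1 := by push_cast; ring
        rw [this, ← add_assoc]
      have hsign' : sg a b (v j) * sg a b (v (j + 1)) < 0 := by
        rw [← hwtj, ← hwt1]; exact hsign
      have hz1 : sg a b (v j) ≠ 0 := by
        intro h; rw [h, zero_mul] at hsign'; exact lt_irrefl 0 hsign'
      have hz2 : sg a b (v (j+1)) ≠ 0 := by
        intro h; rw [h, mul_zero] at hsign'; exact lt_irrefl 0 hsign'
      have hji : j ≠ i := by
        intro h; apply hz1; rw [h, ← hadef]; exact hga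
      have hji1 : j ≠ i + 1 := by
        intro h; apply hz1; rw [h, ← hbdef]; exact hgb
      have hij1 : i ≠ j + 1 := by
        intro h; apply hz2; rw [← h, ← hadef]; exact hga
      obtain ⟨z, hzseg, hz0⟩ := ivt_seg hsign'
      have hzhull : z ∈ convexHull ℝ (↑S : Set Pt) :=
        (convex_convexHull ℝ _).segment_subset
          (subset_convexHull ℝ _ (hsub (mem_range_self j)))
          (subset_convexHull ℝ _ (hsub (mem_range_self (j+1)))) hzseg
      have hzab : z ∈ segment ℝ a b := hlineseg z hzhull hz0
      have hempty := hv.2.2 i j hji hji1 hij1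
      have hmem : z ∈ polyEdge v i ∩ polyEdge v j := ⟨hzab, hzseg⟩
      rw [hempty] at hmem
      exact hmem
end
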